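/- arXiv:1910.14527 — 2 statements merged into one kernel-verified Lean document; each statement's English description precedes it below -/
import Mathlib

section
/- Let d be a positive integer, let Ω ⊆ ℝ^d be a locally compact set, and let φ be any gauge. Then for a typical function f ∈ C(Ω), the set {x ∈ Ω : lip_φ f(x) > 0} is microscopic in ℝ^d. -/
open Filter Set Topology MeasureTheory
open scoped ENNReal NNReal

noncomputable section

/-- A gauge: nondecreasing on `[0,∞)`, right-continuous, `φ 0 = 0`, positive on `(0,∞)`. -/
def IsGauge (φ : ℝ → ℝ) : Prop :=
  (∀ ⦃a b : ℝ⦄, 0 ≤ a → a ≤ b → φ a ≤ φ b) ∧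
  (∀ a : ℝ, 0 ≤ a → ContinuousWithinAt φ (Set.Ici a) a) ∧
  φ 0 = 0 ∧ (∀ r : ℝ, 0 < r → 0 < φ r)

/-- `N_δ(E)`: the least number of sets of diameter at most `δ` needed to cover `E`. -/
def coverNum {X : Type*} [PseudoMetricSpace X] (δ : ℝ) (E : Set X) : ℝ≥0∞ :=
  ⨅ (n : ℕ) (_ : ∃ F : Fin n → Set X,
    (∀ i, EMetric.diam (F i) ≤ ENNReal.ofReal δ) ∧ E ⊆ ⋃ i, F i), (n : ℝ≥0∞)

/-- `ν_0^ζ(E) = liminf_{δ→0+} N_δ(E)·ζ(δ)`. -/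
def nu0 {X : Type*} [PseudoMetricSpace X] (ζ : ℝ → ℝ) (E : Set X) : ℝ≥0∞ :=
  Filter.liminf (fun δ : ℝ => coverNum δ E * ENNReal.ofReal (ζ δ)) (𝓝[>] (0:ℝ))

/-- The lower box-counting measure `ν^ζ`. -/
def lowerBoxMeasure {X : Type*} [PseudoMetricSpace X] (ζ : ℝ → ℝ) (E : Set X) : ℝ≥0∞ :=
  ⨅ (G : ℕ → Set X) (_ : E ⊆ ⋃ n, G n), ∑' n, nu0 ζ (G n)

/-- The lower box dimension `lbdim E = liminf_{r→0+} log N_r(E)/|log r|`. -/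
def lbdim {X : Type*} [PseudoMetricSpace X] (E : Set X) : EReal :=
  Filter.liminf (fun r : ℝ => ENNReal.log (coverNum r E) * ((|Real.log r|⁻¹ : ℝ) : EReal))
    (𝓝[>] (0:ℝ))

/-- The lower packing dimension. -/
def lpdim {X : Type*} [PseudoMetricSpace X] (E : Set X) : EReal :=
  ⨅ (G : ℕ → Set X) (_ : E ⊆ ⋃ n, G n), ⨆ n, lbdim (G n)

/-- The generalized lower scaled oscillation `lip_φ f`. -/
def lipGauge {X : Type*} [PseudoMetricSpace X] (φ : ℝ → ℝ) (f : X → ℝ) (x : X) : ℝ≥0∞ :=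
  Filter.liminf
    (fun r : ℝ => EMetric.diam (f '' Metric.closedBall x r) / ENNReal.ofReal (φ r))
    (𝓝[>] (0:ℝ))

/-- The upper scaled oscillation `Lip f`. -/
def LipGauge {X : Type*} [PseudoMetricSpace X] (φ : ℝ → ℝ) (f : X → ℝ) (x : X) : ℝ≥0∞ :=
  Filter.limsup
    (fun r : ℝ => EMetric.diam (f '' Metric.closedBall x r) / ENNReal.ofReal (φ r))
    (𝓝[>] (0:ℝ))

/-- The Hausdorff measure with gauge `ξ`. -/
def hausdorffGauge {X : Type*} [PseudoMetricSpace X] (ξ : ℝ → ℝ) (E : Set X) : ℝ≥0∞ :=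
  ⨆ (δ : ℝ) (_ : 0 < δ), ⨅ (G : ℕ → Set X) (_ : E ⊆ ⋃ n, G n)
    (_ : ∀ n, EMetric.diam (G n) ≤ ENNReal.ofReal δ),
    ∑' n, ENNReal.ofReal (ξ (EMetric.diam (G n)).toReal)

/-- A box in `ℝ^k`. -/
def IsBox {k : ℕ} (S : Set (EuclideanSpace ℝ (Fin k))) : Prop :=
  ∃ a b : Fin k → ℝ, S = {x | ∀ i, x i ∈ Set.Icc (a i) (b i)}

/-- A microscopic subset of `ℝ^k`. -/
def Microscopic {k : ℕ} (X : Set (EuclideanSpace ℝ (Fin k))) : Prop :=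
  ∀ ε : ℝ, 0 < ε → ∃ B : ℕ → Set (EuclideanSpace ℝ (Fin k)),
    (∀ n, IsBox (B n)) ∧ X ⊆ ⋃ n, B n ∧
    ∀ n, MeasureTheory.volume (B n) ≤ ENNReal.ofReal (ε ^ (n + 1))

/-- A microscopic subset of `ℝ`. -/
def MicroscopicR (E : Set ℝ) : Prop :=
  ∀ ε : ℝ, 0 < ε → ∃ I : ℕ → ℝ × ℝ,
    E ⊆ ⋃ n, Set.Icc (I n).1 (I n).2 ∧
    ∀ n, MeasureTheory.volume (Set.Icc (I n).1 (I n).2) ≤ ENNReal.ofReal (ε ^ (n + 1))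

end


noncomputable section Aux

variable {d : ℕ}

/-- closed box -/
def ABox (a b : Fin d → ℝ) : Set (EuclideanSpace ℝ (Fin d)) :=
  {x | ∀ i, x i ∈ Set.Icc (a i) (b i)}

/-- open box -/
def OBox (a b : Fin d → ℝ) : Set (EuclideanSpace ℝ (Fin d)) :=
  {x | ∀ i, x i ∈ Set.Ioo (a i) (b i)}

lemma isBox_ABox (a b : Fin d → ℝ) : IsBox (ABox a b) := ⟨a, b, rfl⟩

lemma OBox_subset_ABox (a b : Fin d → ℝ) : OBox a b ⊆ ABox a b :=
  fun x hx i => Set.Ioo_subset_Icc_self (hx i)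

lemma isOpen_OBox (a b : Fin d → ℝ) : IsOpen (OBox a b) := by
  have : OBox a b = ⋂ i, (fun x : EuclideanSpace ℝ (Fin d) => x i) ⁻¹' Set.Ioo (a i) (b i) := by
    ext x; simp [OBox]
  rw [this]
  exact isOpen_iInter_of_finite fun i =>
    (isOpen_Ioo).preimage (EuclideanSpace.proj i).continuous

lemma volume_ABox (a b : Fin d → ℝ) :
    volume (ABox a b) = ∏ i, ENNReal.ofReal (b i - a i) := by
  have h : ABox a b = (MeasurableEquiv.toLp 2 (Fin d → ℝ)).symm ⁻¹'
      (Set.univ.pi fun i => Set.Icc (a i) (b i)) := by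
    ext x
    simp only [ABox, Set.mem_setOf_eq, Set.mem_preimage, Set.mem_univ_pi]
    constructor
    · intro h i; exact h i
    · intro h i; exact h i
  rw [h, (EuclideanSpace.volume_preserving_symm_measurableEquiv_toLp (Fin d)).measure_preimage
      (MeasurableSet.univ_pi fun i => measurableSet_Icc).nullMeasurableSet,
    volume_pi_pi]
  simp [Real.volume_Icc]

lemma ABox_one_zero_empty (hd : 0 < d) : (ABox (fun _ => 1) (fun _ => 0) : Set (EuclideanSpace ℝ (Fin d))) = ∅ := by
  ext x
  simp only [ABox, Set.mem_setOf_eq, Set.mem_empty_iff_false, iff_false, not_forall]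
  exact ⟨⟨0, hd⟩, by simp⟩

lemma abs_coord_le_dist (x y : EuclideanSpace ℝ (Fin d)) (j : Fin d) :
    |x j - y j| ≤ dist x y := by
  rw [EuclideanSpace.dist_eq]
  have h1 : |x j - y j| = Real.sqrt ((x j - y j)^2) := (Real.sqrt_sq_eq_abs _).symm
  rw [h1]
  apply Real.sqrt_le_sqrt
  have : (x j - y j)^2 = dist (x j) (y j)^2 := by rw [Real.dist_eq, sq_abs]
  rw [this]
  exact Finset.single_le_sum (f := fun i => dist (x i) (y i)^2) (fun i _ => sq_nonneg _)
    (Finset.mem_univ j)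

lemma abs_coord_le_norm (x : EuclideanSpace ℝ (Fin d)) (j : Fin d) :
    |x j| ≤ ‖x‖ := by
  have := abs_coord_le_dist x 0 j
  simpa [dist_eq_norm] using this

end Aux

noncomputable section Theta

/-- grid-collapse function -/
def theta (ρ w : ℝ) (M : ℕ) (t : ℝ) : ℝ :=
  -(M:ℝ)*ρ + (ρ/w) * ∑ k ∈ Finset.Icc (-(M:ℤ)) (M:ℤ), max 0 (min (t - ((k:ℝ)*ρ - w)) w)

lemma continuous_theta (ρ w : ℝ) (M : ℕ) : Continuous (theta ρ w M) := by
  apply continuous_const.add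
  apply Continuous.mul continuous_const
  apply continuous_finset_sum
  intro k _
  exact continuous_const.max ((continuous_id.sub continuous_const).min continuous_const)

lemma theta_const_on_core {ρ w : ℝ} (hρ : 0 ≤ ρ) (hw : 0 ≤ w) (M : ℕ) (k : ℤ) {t t' : ℝ}
    (ht : t ∈ Set.Icc ((k:ℝ)*ρ) (((k:ℝ)+1)*ρ - w)) (ht' : t' ∈ Set.Icc ((k:ℝ)*ρ) (((k:ℝ)+1)*ρ - w)) :
    theta ρ w M t = theta ρ w M t' := by
  unfold theta
  congr 1
  congr 1
  apply Finset.sum_congr rfl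
  intro j _
  have key : ∀ u : ℝ, u ∈ Set.Icc ((k:ℝ)*ρ) (((k:ℝ)+1)*ρ - w) →
      max 0 (min (u - ((j:ℝ)*ρ - w)) w) = if j ≤ k then w else 0 := by
    intro u hu
    rcases le_or_gt j k with hj | hj
    · have hjr : (j:ℝ)*ρ ≤ (k:ℝ)*ρ := by
        apply mul_le_mul_of_nonneg_right _ hρ
        exact_mod_cast hj
      have h1 : w ≤ u - ((j:ℝ)*ρ - w) := by
        have := hu.1; linarith
      rw [if_pos hj, min_eq_right h1, max_eq_right hw]
    · have hjk : (k:ℝ)+1 ≤ (j:ℝ) := by exact_mod_cast hj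
      have hjr : ((k:ℝ)+1)*ρ ≤ (j:ℝ)*ρ := mul_le_mul_of_nonneg_right hjk hρ
      have h1 : u - ((j:ℝ)*ρ - w) ≤ 0 := by
        have := hu.2; linarith
      rw [if_neg (not_le.mpr hj), max_eq_left (le_trans (min_le_left _ _) h1)]
  rw [key t ht, key t' ht']

lemma theta_lb {ρ w R t : ℝ} {M : ℕ} (hρ : 0 < ρ) (hw : 0 < w)
    (hM : (R+1)/ρ ≤ (M:ℝ)) (ht : |t| ≤ R) :
    t ≤ theta ρ w M t := by
  set κ : ℤ := ⌊t/ρ⌋ with hκ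
  have hκle : (κ:ℝ) ≤ t/ρ := Int.floor_le _
  have hκgt : t/ρ - 1 < (κ:ℝ) := Int.sub_one_lt_floor _
  have htR : -R ≤ t ∧ t ≤ R := abs_le.mp ht
  have hRρ : R + 1 ≤ (M:ℝ)*ρ := by
    have := (div_le_iff₀ hρ).mp hM; linarith
  have hMκ : -(M:ℤ) ≤ κ := by
    rw [hκ, Int.le_floor]
    push_cast
    rw [le_div_iff₀ hρ]
    nlinarith
  have hκM : κ ≤ (M:ℤ) := by
    have h3 : (κ:ℝ) ≤ (M:ℝ) := by
      have h2 : t/ρ ≤ (R+1)/ρ := by gcongr; linarith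
      have h4 : (R+1)/ρ ≤ (M:ℝ) := hM
      linarith
    exact_mod_cast h3
  -- lower bound on the sum
  have hterm : ∀ j ∈ Finset.Icc (-(M:ℤ)) κ, (w:ℝ) = max 0 (min (t - ((j:ℝ)*ρ - w)) w) := by
    intro j hj
    have hjκ : j ≤ κ := (Finset.mem_Icc.mp hj).2
    have hjt : (j:ℝ)*ρ ≤ t := by
      have : (j:ℝ) ≤ t/ρ := by
        have := Int.le_floor.mp hjκ
        exact_mod_cast this
      calc (j:ℝ)*ρ ≤ (t/ρ)*ρ := mul_le_mul_of_nonneg_right this hρ.le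
        _ = t := by field_simp
    have h1 : w ≤ t - ((j:ℝ)*ρ - w) := by linarith
    rw [min_eq_right h1, max_eq_right hw.le]
  have hsum : ((Finset.Icc (-(M:ℤ)) κ).card : ℝ) * w ≤
      ∑ k ∈ Finset.Icc (-(M:ℤ)) (M:ℤ), max 0 (min (t - ((k:ℝ)*ρ - w)) w) := by
    calc ((Finset.Icc (-(M:ℤ)) κ).card : ℝ) * w
        = ∑ k ∈ Finset.Icc (-(M:ℤ)) κ, max 0 (min (t - ((k:ℝ)*ρ - w)) w) := by
          rw [Finset.sum_congr rfl (fun j hj => (hterm j hj).symm)]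
          simp [mul_comm]
      _ ≤ _ := by
          apply Finset.sum_le_sum_of_subset_of_nonneg
          · exact Finset.Icc_subset_Icc_right hκM
          · intro i _ _; positivity
  have hcard : ((Finset.Icc (-(M:ℤ)) κ).card : ℝ) = (κ:ℝ) + (M:ℝ) + 1 := by
    rw [Int.card_Icc]
    have h6 : (((κ + 1 - -(M:ℤ)).toNat : ℤ)) = κ + (M:ℤ) + 1 := by omega
    exact_mod_cast h6
  have hfinal : -(M:ℝ)*ρ + (ρ/w) * (((κ:ℝ) + (M:ℝ) + 1) * w) = ρ * (κ:ℝ) + ρ := by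
    field_simp; ring
  unfold theta
  have h6 : (ρ/w) * (((κ:ℝ) + (M:ℝ) + 1) * w) ≤
      (ρ/w) * ∑ k ∈ Finset.Icc (-(M:ℤ)) (M:ℤ), max 0 (min (t - ((k:ℝ)*ρ - w)) w) := by
    apply mul_le_mul_of_nonneg_left _ (by positivity)
    rw [← hcard]; exact hsum
  have h7 : t ≤ ρ * (κ:ℝ) + ρ := by
    have := mul_lt_mul_of_pos_left hκgt hρ
    have h8 : ρ * (t/ρ) = t := by field_simp
    nlinarith
  linarith

lemma theta_ub {ρ w R t : ℝ} {M : ℕ} (hρ : 0 < ρ) (hw : 0 < w) (hwρ : w ≤ ρ)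
    (hM : (R+1)/ρ ≤ (M:ℝ)) (ht : |t| ≤ R) :
    theta ρ w M t ≤ t + 2*ρ := by
  set κ : ℤ := ⌊(t+w)/ρ⌋ with hκ
  have hκle : (κ:ℝ) ≤ (t+w)/ρ := Int.floor_le _
  have htR : -R ≤ t ∧ t ≤ R := abs_le.mp ht
  have hRρ : R + 1 ≤ (M:ℝ)*ρ := by
    have := (div_le_iff₀ hρ).mp hM; linarith
  have hMκ : -(M:ℤ) ≤ κ := by
    rw [hκ, Int.le_floor]
    push_cast
    rw [le_div_iff₀ hρ]
    nlinarith [htR.1, hw, hRρ]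
  have hterm : ∀ j ∈ Finset.Icc (-(M:ℤ)) (M:ℤ),
      max 0 (min (t - ((j:ℝ)*ρ - w)) w) ≤ if j ≤ κ then w else 0 := by
    intro j _
    rcases le_or_gt j κ with hj | hj
    · rw [if_pos hj]
      exact max_le hw.le (min_le_right _ _)
    · rw [if_neg (not_le.mpr hj)]
      have hjgt : (t+w)/ρ < (j:ℝ) := by
        have h1 : κ + 1 ≤ j := hj
        have h2 : ((κ:ℝ) + 1) ≤ (j:ℝ) := by exact_mod_cast h1
        have := Int.lt_floor_add_one ((t+w)/ρ)
        linarith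
      have hjρ : t + w < (j:ℝ)*ρ := by
        have := mul_lt_mul_of_pos_right hjgt hρ
        have h8 : ((t+w)/ρ) * ρ = t + w := by field_simp
        linarith
      have h1 : t - ((j:ℝ)*ρ - w) ≤ 0 := by linarith
      exact max_le le_rfl (le_trans (min_le_left _ _) h1)
  have hsum : ∑ k ∈ Finset.Icc (-(M:ℤ)) (M:ℤ), max 0 (min (t - ((k:ℝ)*ρ - w)) w) ≤
      ((κ:ℝ) + (M:ℝ) + 1) * w := by
    calc ∑ k ∈ Finset.Icc (-(M:ℤ)) (M:ℤ), max 0 (min (t - ((k:ℝ)*ρ - w)) w)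
        ≤ ∑ j ∈ Finset.Icc (-(M:ℤ)) (M:ℤ), (if j ≤ κ then w else 0) := Finset.sum_le_sum hterm
      _ = ∑ j ∈ (Finset.Icc (-(M:ℤ)) (M:ℤ)).filter (· ≤ κ), w := (Finset.sum_filter _ _).symm
      _ = ((Finset.Icc (-(M:ℤ)) (M:ℤ)).filter (· ≤ κ)).card • w := Finset.sum_const w
      _ ≤ ((κ:ℝ) + (M:ℝ) + 1) * w := by
          rw [nsmul_eq_mul]
          apply mul_le_mul_of_nonneg_right _ hw.le
          have hsub : (Finset.Icc (-(M:ℤ)) (M:ℤ)).filter (· ≤ κ) ⊆ Finset.Icc (-(M:ℤ)) κ := by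
            intro j hj
            simp only [Finset.mem_filter, Finset.mem_Icc] at hj ⊢
            exact ⟨hj.1.1, hj.2⟩
          have hcard := Finset.card_le_card hsub
          have hcard2 : ((Finset.Icc (-(M:ℤ)) κ).card : ℝ) = (κ:ℝ) + (M:ℝ) + 1 := by
            rw [Int.card_Icc]
            have h6 : (((κ + 1 - -(M:ℤ)).toNat : ℤ)) = κ + (M:ℤ) + 1 := by omega
            exact_mod_cast h6
          calc (((Finset.Icc (-(M:ℤ)) (M:ℤ)).filter (· ≤ κ)).card : ℝ)
              ≤ ((Finset.Icc (-(M:ℤ)) κ).card : ℝ) := by exact_mod_cast hcard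
            _ = (κ:ℝ) + (M:ℝ) + 1 := hcard2
  unfold theta
  have h6 : (ρ/w) * ∑ k ∈ Finset.Icc (-(M:ℤ)) (M:ℤ), max 0 (min (t - ((k:ℝ)*ρ - w)) w) ≤
      (ρ/w) * (((κ:ℝ) + (M:ℝ) + 1) * w) := mul_le_mul_of_nonneg_left hsum (by positivity)
  have hfinal : -(M:ℝ)*ρ + (ρ/w) * (((κ:ℝ) + (M:ℝ) + 1) * w) = ρ * (κ:ℝ) + ρ := by
    field_simp; ring
  have h7 : ρ * (κ:ℝ) ≤ t + w := by
    have := mul_le_mul_of_nonneg_left hκle hρ.le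
    have h8 : ρ * ((t+w)/ρ) = t + w := by field_simp
    linarith
  linarith

lemma exists_slab {ρ w R t : ℝ} {M : ℕ} (hρ : 0 < ρ) (hw : 0 < w) (hw1 : w ≤ 1)
    (hM : (R+1)/ρ ≤ (M:ℝ)) (ht : |t| ≤ R)
    (hnc : ∀ k : ℤ, t ∉ Set.Ioo ((k:ℝ)*ρ) (((k:ℝ)+1)*ρ - w)) :
    ∃ k : ℤ, -(M:ℤ) ≤ k ∧ k ≤ (M:ℤ) ∧ (k:ℝ)*ρ - w ≤ t ∧ t ≤ (k:ℝ)*ρ := by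
  set κ : ℤ := ⌊t/ρ⌋ with hκ
  have hκle : (κ:ℝ)*ρ ≤ t := by
    have h1 : (κ:ℝ) ≤ t/ρ := Int.floor_le _
    calc (κ:ℝ)*ρ ≤ (t/ρ)*ρ := mul_le_mul_of_nonneg_right h1 hρ.le
      _ = t := by field_simp
  have hκgt : t < ((κ:ℝ)+1)*ρ := by
    have h1 : t/ρ < (κ:ℝ)+1 := by exact_mod_cast Int.lt_floor_add_one (t/ρ)
    have := mul_lt_mul_of_pos_right h1 hρ
    have h8 : (t/ρ)*ρ = t := by field_simp
    linarith
  have htR : -R ≤ t ∧ t ≤ R := abs_le.mp ht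
  have hRρ : R + 1 ≤ (M:ℝ)*ρ := by
    have := (div_le_iff₀ hρ).mp hM; linarith
  have hR : 0 ≤ R := le_trans (abs_nonneg t) ht
  have hMκ : -(M:ℤ) ≤ κ := by
    rw [hκ, Int.le_floor]; push_cast; rw [le_div_iff₀ hρ]; nlinarith
  have hbound : ∀ k : ℤ, (k:ℝ)*ρ - w ≤ t → t ≤ (k:ℝ)*ρ → -(M:ℤ) ≤ k ∧ k ≤ (M:ℤ) := by
    intro k h1 h2
    constructor
    · have : -(M:ℝ) ≤ (k:ℝ) := by
        by_contra hc
        push_neg at hc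
        have : (k:ℝ)*ρ < -(M:ℝ)*ρ := mul_lt_mul_of_pos_right hc hρ
        nlinarith
      exact_mod_cast this
    · have : (k:ℝ) ≤ (M:ℝ) := by
        by_contra hc
        push_neg at hc
        have : (M:ℝ)*ρ < (k:ℝ)*ρ := mul_lt_mul_of_pos_right hc hρ
        nlinarith
      exact_mod_cast this
  have := hnc κ
  rw [Set.mem_Ioo, not_and_or] at this
  rcases this with h | h
  · push_neg at h
    have heq : t ≤ (κ:ℝ)*ρ := h
    exact ⟨κ, (hbound κ (by linarith) heq).1, (hbound κ (by linarith) heq).2, by linarith, heq⟩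
  · push_neg at h
    have h1 : ((κ:ℝ)+1)*ρ - w ≤ t := h
    have h2 : t ≤ ((κ:ℝ)+1)*ρ := hκgt.le
    refine ⟨κ+1, ?_, ?_, ?_, ?_⟩ <;>
      [skip; skip; (push_cast; linarith); (push_cast; linarith)]
    · exact (hbound (κ+1) (by push_cast; linarith) (by push_cast; linarith)).1
    · exact (hbound (κ+1) (by push_cast; linarith) (by push_cast; linarith)).2

end Theta

noncomputable section Psi
variable {d : ℕ}

def psi (d : ℕ) (ρ w : ℝ) (M : ℕ) : EuclideanSpace ℝ (Fin d) → EuclideanSpace ℝ (Fin d) :=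
  fun x => (PiLp.continuousLinearEquiv 2 ℝ (fun _ : Fin d => ℝ)).symm
    (fun j => theta ρ w M (x j))

lemma psi_apply (ρ w : ℝ) (M : ℕ) (x : EuclideanSpace ℝ (Fin d)) (j : Fin d) :
    psi d ρ w M x j = theta ρ w M (x j) := rfl

lemma continuous_psi (ρ w : ℝ) (M : ℕ) : Continuous (psi d ρ w M) := by
  apply (PiLp.continuousLinearEquiv 2 ℝ (fun _ : Fin d => ℝ)).symm.continuous.comp
  apply continuous_pi
  intro j
  exact (continuous_theta ρ w M).comp ((EuclideanSpace.proj j).continuous)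

lemma dist_psi_le {ρ w R : ℝ} {M : ℕ} (hρ : 0 < ρ) (hw : 0 < w) (hwρ : w ≤ ρ)
    (hM : (R+1)/ρ ≤ (M:ℝ)) (x : EuclideanSpace ℝ (Fin d)) (hx : ‖x‖ ≤ R) :
    dist (psi d ρ w M x) x ≤ 2*ρ*Real.sqrt d := by
  have hcoord : ∀ j : Fin d, |x j| ≤ R := by
    intro j
    calc |x j| ≤ ‖x‖ := by
          have h := EuclideanSpace.norm_eq x
          rw [h, ← Real.sqrt_sq_eq_abs]
          apply Real.sqrt_le_sqrt
          have : |x j|^2 = ‖x j‖^2 := by rw [Real.norm_eq_abs]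
          rw [← sq_abs]
          calc |x j|^2 = ‖x j‖^2 := this
            _ ≤ ∑ i : Fin d, ‖x i‖^2 := Finset.single_le_sum
                (f := fun i => ‖x i‖^2) (fun i _ => sq_nonneg _) (Finset.mem_univ j)
      _ ≤ R := hx
  rw [EuclideanSpace.dist_eq]
  have hbd : ∀ j : Fin d, dist (psi d ρ w M x j) (x j)^2 ≤ (2*ρ)^2 := by
    intro j
    rw [psi_apply, Real.dist_eq]
    have h1 := theta_lb hρ hw hM (hcoord j)
    have h2 := theta_ub hρ hw hwρ hM (hcoord j)
    have habs : |theta ρ w M (x j) - x j| ≤ 2*ρ := by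
      rw [abs_le]; constructor <;> linarith
    nlinarith [abs_nonneg (theta ρ w M (x j) - x j), habs]
  calc √(∑ i : Fin d, dist (psi d ρ w M x i) (x i) ^ 2)
      ≤ √(∑ _i : Fin d, (2*ρ)^2) := by
        apply Real.sqrt_le_sqrt
        exact Finset.sum_le_sum (fun i _ => hbd i)
    _ = 2*ρ*Real.sqrt d := by
        rw [Finset.sum_const, Finset.card_univ, Fintype.card_fin, nsmul_eq_mul,
          Real.sqrt_mul (by positivity), Real.sqrt_sq (by positivity)]
        ring

end Psi

noncomputable section Metr

/-- Perturbation bound for diameters of images. -/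
lemma diam_image_perturb {X : Type*} [PseudoMetricSpace X] (T : Set X) (f g : X → ℝ) (η : ℝ)
    (h : ∀ y ∈ T, dist (g y) (f y) ≤ η) :
    EMetric.diam (g '' T) ≤ EMetric.diam (f '' T) + 2 * ENNReal.ofReal η := by
  apply EMetric.diam_le
  rintro a ⟨y, hy, rfl⟩ b ⟨z, hz, rfl⟩
  calc edist (g y) (g z) ≤ edist (g y) (f y) + edist (f y) (f z) + edist (f z) (g z) :=
        edist_triangle4 _ _ _ _
    _ ≤ ENNReal.ofReal η + EMetric.diam (f '' T) + ENNReal.ofReal η := by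
        gcongr
        · rw [edist_dist]; exact ENNReal.ofReal_le_ofReal (h y hy)
        · exact EMetric.edist_le_diam_of_mem (Set.mem_image_of_mem f hy)
            (Set.mem_image_of_mem f hz)
        · rw [edist_dist, dist_comm]; exact ENNReal.ofReal_le_ofReal (h z hz)
    _ = EMetric.diam (f '' T) + 2 * ENNReal.ofReal η := by ring

/-- Shrinking closed balls: diameters of images converge from outside. -/
lemma exists_diam_image_closedBall_lt {X : Type*} [MetricSpace X] {f : X → ℝ}
    (hf : Continuous f) {x : X} {r ρ0 : ℝ} (hr : 0 ≤ r) (hrρ0 : r < ρ0)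
    (hcpt : IsCompact (Metric.closedBall x ρ0)) {c : ℝ≥0∞}
    (h : EMetric.diam (f '' Metric.closedBall x r) < c) :
    ∃ ρ : ℝ, r < ρ ∧ ρ ≤ ρ0 ∧ EMetric.diam (f '' Metric.closedBall x ρ) < c := by
  obtain ⟨q, hq1, hq2⟩ := ENNReal.lt_iff_exists_nnreal_btwn.mp h
  set D := EMetric.diam (f '' Metric.closedBall x r) with hD
  have hDt : D ≠ ⊤ := (lt_trans hq1 ENNReal.coe_lt_top).ne
  have hDr : D.toReal < (q:ℝ) := by
    have := ENNReal.toReal_lt_toReal hDt (ENNReal.coe_ne_top (r := q))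
    rw [ENNReal.coe_toReal] at this
    exact this.mpr hq1
  set γ : ℝ := ((q:ℝ) - D.toReal)/2 with hγ
  have hγpos : 0 < γ := by simp only [hγ]; linarith
  set A := f '' Metric.closedBall x r with hA
  have hAne : A.Nonempty := ⟨f x, Set.mem_image_of_mem f (Metric.mem_closedBall_self hr)⟩
  set W : Set X := {y | Metric.infDist (f y) A < γ} with hW
  have hWopen : IsOpen W := by
    apply isOpen_lt _ continuous_const
    exact (Metric.continuous_infDist_pt A).comp hf
  have hSW : Metric.closedBall x r ⊆ W := by
    intro y hy
    have : Metric.infDist (f y) A = 0 :=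
      Metric.infDist_zero_of_mem (Set.mem_image_of_mem f hy)
    simp only [hW, Set.mem_setOf_eq, this]; exact hγpos
  set ι := {t : ℝ // r < t ∧ t ≤ ρ0} with hι
  haveI : Nonempty ι := ⟨⟨ρ0, hrρ0, le_rfl⟩⟩
  set V : ι → Set X := fun t => Metric.closedBall x t.1 with hV
  have hdir : Directed (fun x1 x2 => x1 ⊇ x2) V := by
    intro t₁ t₂
    refine ⟨⟨min t₁.1 t₂.1, lt_min t₁.2.1 t₂.2.1, le_trans (min_le_left _ _) t₁.2.2⟩, ?_, ?_⟩
    · exact Metric.closedBall_subset_closedBall (min_le_left _ _)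
    · exact Metric.closedBall_subset_closedBall (min_le_right _ _)
  have hVc : ∀ t : ι, IsCompact (V t) :=
    fun t => hcpt.of_isClosed_subset Metric.isClosed_closedBall
      (Metric.closedBall_subset_closedBall t.2.2)
  have hVcl : ∀ t : ι, IsClosed (V t) := fun t => Metric.isClosed_closedBall
  have hInt : (⋂ t : ι, V t) ⊆ Metric.closedBall x r := by
    intro y hy
    simp only [Set.mem_iInter] at hy
    rw [Metric.mem_closedBall]
    by_contra hc
    push_neg at hc
    set t0 : ℝ := min ρ0 ((dist y x + r)/2) with ht0
    have h1 : r < t0 := by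
      apply lt_min hrρ0; linarith
    have h2 : t0 ≤ ρ0 := min_le_left _ _
    have := hy ⟨t0, h1, h2⟩
    rw [Metric.mem_closedBall] at this
    have h3 : t0 ≤ (dist y x + r)/2 := min_le_right _ _
    linarith
  have hU : ∀ y ∈ ⋂ t : ι, V t, W ∈ 𝓝 y := fun y hy =>
    hWopen.mem_nhds (hSW (hInt hy))
  obtain ⟨t, ht⟩ := exists_subset_nhds_of_isCompact' hdir hVc hVcl hU
  refine ⟨t.1, t.2.1, t.2.2, ?_⟩
  have hdiam : EMetric.diam (f '' Metric.closedBall x t.1) ≤ (q : ℝ≥0∞) := by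
    apply EMetric.diam_le
    rintro a ⟨y, hy, rfl⟩ b ⟨z, hz, rfl⟩
    have hy' : Metric.infDist (f y) A < γ := ht hy
    have hz' : Metric.infDist (f z) A < γ := ht hz
    obtain ⟨u, hu, hu2⟩ := (Metric.infDist_lt_iff hAne).mp hy'
    obtain ⟨v, hv, hv2⟩ := (Metric.infDist_lt_iff hAne).mp hz'
    have huv : dist u v ≤ D.toReal := by
      have := EMetric.edist_le_diam_of_mem hu hv
      rw [show Metric.ediam A = D from hD.symm] at this
      have h2 := ENNReal.toReal_mono hDt this
      rwa [edist_dist, ENNReal.toReal_ofReal dist_nonneg] at h2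
    have hfin : dist (f y) (f z) ≤ (q:ℝ) := by
      calc dist (f y) (f z) ≤ dist (f y) u + dist u v + dist v (f z) := dist_triangle4 _ _ _ _
        _ ≤ γ + D.toReal + γ := by
            have := dist_comm v (f z)
            gcongr <;> linarith [hv2, hu2, huv]
        _ = (q:ℝ) := by simp only [hγ]; ring
    rw [edist_dist]
    calc ENNReal.ofReal (dist (f y) (f z)) ≤ ENNReal.ofReal (q:ℝ) :=
          ENNReal.ofReal_le_ofReal hfin
      _ = (q : ℝ≥0∞) := ENNReal.ofReal_coe_nnreal
  exact lt_of_le_of_lt hdiam hq2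

/-- Uniform smallness of balls over a compact set. -/
lemma exists_ball_compact {X : Type*} [MetricSpace X] [LocallyCompactSpace X] {K : Set X}
    (hK : IsCompact K) :
    ∃ s : ℝ, 0 < s ∧ ∃ C : Set X, IsCompact C ∧ ∀ x ∈ K, Metric.closedBall x s ⊆ C := by
  have hδ : ∀ x : X, ∃ δ : ℝ, 0 < δ ∧ IsCompact (Metric.closedBall x δ) := by
    intro x
    obtain ⟨N, hN, hNc⟩ := exists_compact_mem_nhds x
    obtain ⟨δ, hδpos, hδ⟩ := Metric.nhds_basis_closedBall.mem_iff.mp hNc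
    exact ⟨δ, hδpos, hN.of_isClosed_subset Metric.isClosed_closedBall hδ⟩
  choose δ hδpos hδc using hδ
  rcases Set.eq_empty_or_nonempty K with hKe | hKne
  · exact ⟨1, one_pos, ∅, isCompact_empty, by simp [hKe]⟩
  · have hcov : K ⊆ ⋃ x : X, Metric.ball x (δ x / 2) := by
      intro x _
      exact Set.mem_iUnion.mpr ⟨x, by simp [Metric.mem_ball, half_pos (hδpos x)]⟩
    obtain ⟨t, ht⟩ := hK.elim_finite_subcover (fun x : X => Metric.ball x (δ x / 2))
      (fun x => Metric.isOpen_ball) hcov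
    have htne : t.Nonempty := by
      by_contra hc
      rw [Finset.not_nonempty_iff_eq_empty] at hc
      obtain ⟨x, hx⟩ := hKne
      have := ht hx
      simp [hc] at this
    refine ⟨t.inf' htne (fun i => δ i / 2), ?_, ⋃ i ∈ t, Metric.closedBall i (δ i), ?_, ?_⟩
    · rw [Finset.lt_inf'_iff]
      exact fun i _ => half_pos (hδpos i)
    · exact t.finite_toSet.isCompact_biUnion (fun i _ => hδc i)
    · intro x hx
      obtain ⟨i, hi1, hi2⟩ := Set.mem_iUnion₂.mp (ht hx)
      intro y hy
      apply Set.mem_biUnion hi1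
      rw [Metric.mem_closedBall] at hy ⊢
      have h1 : dist x i < δ i / 2 := hi2
      have h2 : t.inf' htne (fun i => δ i / 2) ≤ δ i / 2 := Finset.inf'_le _ hi1
      calc dist y i ≤ dist y x + dist x i := dist_triangle _ _ _
        _ ≤ δ i / 2 + δ i / 2 := by linarith [hy]
        _ = δ i := by ring
      
/-- basic compact-convergence neighbourhoods are neighbourhoods -/
lemma mem_nhds_compactConvergence {X : Type*} [TopologicalSpace X] (f : C(X, ℝ))
    {C : Set X} (hC : IsCompact C) {η : ℝ} (hη : 0 < η) :
    {g : C(X, ℝ) | ∀ y ∈ C, dist (f y) (g y) < η} ∈ 𝓝 f := by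
  rw [nhds_eq_comap_uniformity]
  apply Filter.mem_comap.mpr
  refine ⟨{fg | ∀ x ∈ C, (fg.1 x, fg.2 x) ∈ {p : ℝ × ℝ | dist p.1 p.2 < η}}, ?_, ?_⟩
  · exact ContinuousMap.hasBasis_compactConvergenceUniformity.mem_of_mem
      (i := (C, {p : ℝ × ℝ | dist p.1 p.2 < η})) ⟨hC, Metric.dist_mem_uniformity hη⟩
  · intro g hg y hy
    exact hg y hy

/-- extraction of a basic neighbourhood -/
lemma exists_compactConvergence_subset {X : Type*} [TopologicalSpace X] (f : C(X, ℝ))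
    {V : Set C(X, ℝ)} (hV : V ∈ 𝓝 f) :
    ∃ L : Set X, IsCompact L ∧ ∃ η : ℝ, 0 < η ∧
      {g : C(X, ℝ) | ∀ x ∈ L, dist (f x) (g x) < η} ⊆ V := by
  rw [nhds_eq_comap_uniformity, Filter.mem_comap] at hV
  obtain ⟨U, hU, hUV⟩ := hV
  obtain ⟨⟨L, W⟩, ⟨hL, hW⟩, hsub⟩ :=
    ContinuousMap.hasBasis_compactConvergenceUniformity.mem_iff.mp hU
  obtain ⟨η, hη, hηW⟩ := Metric.mem_uniformity_dist.mp hW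
  refine ⟨L, hL, η, hη, ?_⟩
  intro g hg
  apply hUV
  apply hsub
  intro x hx
  exact hηW (hg x hx)

end Metr

noncomputable section Core

/-- The bad set at scales below `s` with constant `1/(n+1)`. -/
def ASet {X : Type*} [PseudoMetricSpace X] (φ : ℝ → ℝ) (f : X → ℝ) (n : ℕ) (s : ℝ) : Set X :=
  {x | ∀ r : ℝ, 0 < r → r < s →
    ENNReal.ofReal (φ (r/2)) ≤ ((n:ℝ≥0∞)+1) * EMetric.diam (f '' Metric.closedBall x r)}

lemma ASet_mono {X : Type*} [PseudoMetricSpace X] (φ : ℝ → ℝ) (f : X → ℝ) (n : ℕ)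
    {s s' : ℝ} (h : s ≤ s') : ASet φ f n s' ⊆ ASet φ f n s :=
  fun x hx r hr hrs => hx r hr (lt_of_lt_of_le hrs h)

lemma lip_pos_mem_ASet {X : Type*} [PseudoMetricSpace X] {φ : ℝ → ℝ} (hφ : IsGauge φ)
    {f : X → ℝ} {x : X} (h : 0 < lipGauge φ f x) :
    ∃ n : ℕ, ∃ δ : ℝ, 0 < δ ∧ x ∈ ASet φ f n δ := by
  obtain ⟨n, hn⟩ := ENNReal.exists_inv_nat_lt h.ne'
  have hn' : ((n:ℝ≥0∞)+1)⁻¹ < lipGauge φ f x := by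
    apply lt_of_le_of_lt _ hn
    apply ENNReal.inv_le_inv.mpr
    exact le_self_add
  have hev := eventually_lt_of_lt_liminf hn'
  obtain ⟨u, hu, huE⟩ := mem_nhdsGT_iff_exists_Ioo_subset.mp hev
  refine ⟨n, u, hu, ?_⟩
  intro r hr hru
  have hmem : r ∈ Set.Ioo (0:ℝ) u := ⟨hr, hru⟩
  have hlt := huE hmem
  simp only [Set.mem_setOf_eq] at hlt
  set b := ENNReal.ofReal (φ r) with hb
  have hb0 : b ≠ 0 := by
    rw [hb, Ne, ENNReal.ofReal_eq_zero, not_le]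
    exact hφ.2.2.2 r hr
  have hbt : b ≠ ⊤ := ENNReal.ofReal_ne_top
  have h2 : ((n:ℝ≥0∞)+1)⁻¹ * b < EMetric.diam (f '' Metric.closedBall x r) :=
    (ENNReal.lt_div_iff_mul_lt (Or.inl hb0) (Or.inl hbt)).mp hlt
  have hne : ((n:ℝ≥0∞)+1) ≠ 0 := by simp
  have hnt : ((n:ℝ≥0∞)+1) ≠ ⊤ := by
    simp [ENNReal.add_ne_top]
  calc ENNReal.ofReal (φ (r/2)) ≤ b := by
        rw [hb]
        apply ENNReal.ofReal_le_ofReal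
        exact hφ.1 (by linarith) (by linarith)
    _ = ((n:ℝ≥0∞)+1) * (((n:ℝ≥0∞)+1)⁻¹ * b) := by
        rw [← mul_assoc, ENNReal.mul_inv_cancel hne hnt, one_mul]
    _ ≤ ((n:ℝ≥0∞)+1) * EMetric.diam (f '' Metric.closedBall x r) :=
        mul_le_mul_right h2.le _

/-- The generic sets. -/
def UU {d : ℕ} (φ : ℝ → ℝ) (Ω : Set (EuclideanSpace ℝ (Fin d))) (K : Set ↥Ω) (n : ℕ)
    (s ε : ℝ) : Set C(↥Ω, ℝ) :=
  {f | ∃ (N : ℕ) (a b : Fin N → Fin d → ℝ),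
     (∀ x : ↥Ω, x ∈ ASet φ (⇑f) n s → x ∈ K →
        ∃ i, (x : EuclideanSpace ℝ (Fin d)) ∈ OBox (a i) (b i)) ∧
     ∀ i, MeasureTheory.volume (ABox (a i) (b i)) ≤ ENNReal.ofReal (ε ^ (N+1))}

lemma isOpen_UU {d : ℕ} {φ : ℝ → ℝ} (hφ : IsGauge φ) (Ω : Set (EuclideanSpace ℝ (Fin d)))
    {K C : Set ↥Ω} (hK : IsCompact K) (hC : IsCompact C) {s : ℝ} (hs : 0 < s)
    (hsub : ∀ x ∈ K, Metric.closedBall x s ⊆ C) (n : ℕ) (ε : ℝ) :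
    IsOpen (UU φ Ω K n s ε) := by
  rw [isOpen_iff_mem_nhds]
  intro f hf
  obtain ⟨N, a, b, hcov, hvol⟩ := hf
  set U : Set (EuclideanSpace ℝ (Fin d)) := ⋃ i, OBox (a i) (b i) with hU
  have hUo : IsOpen U := isOpen_iUnion fun i => isOpen_OBox _ _
  set D : Set (EuclideanSpace ℝ (Fin d)) := (Subtype.val '' K) \ U with hD
  have hDc : IsCompact D := (hK.image continuous_subtype_val).diff hUo
  -- key pointwise estimate
  have key : ∀ z : ↥D, ∃ ηz δz : ℝ, 0 < ηz ∧ 0 < δz ∧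
      ∀ g : C(↥Ω, ℝ), (∀ y ∈ C, dist (f y) (g y) ≤ ηz) →
      ∀ x'' : ↥Ω, dist (x'' : EuclideanSpace ℝ (Fin d)) (z : EuclideanSpace ℝ (Fin d)) < δz →
        x'' ∉ ASet φ (⇑g) n s := by
    rintro ⟨z, hzK, hzU⟩
    obtain ⟨x', hx'K, hx'z⟩ := hzK
    have hx'A : x' ∉ ASet φ (⇑f) n s := by
      intro hmem
      obtain ⟨i, hi⟩ := hcov x' hmem hx'K
      exact hzU (by rw [← hx'z]; exact Set.mem_iUnion.mpr ⟨i, hi⟩)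
    simp only [ASet, Set.mem_setOf_eq, not_forall] at hx'A
    obtain ⟨r, hr, hrs, hnle⟩ := hx'A
    push_neg at hnle
    set b0 := ENNReal.ofReal (φ (r/2)) with hb0
    have hne : ((n:ℝ≥0∞)+1) ≠ 0 := by simp
    have hnt : ((n:ℝ≥0∞)+1) ≠ ⊤ := by simp [ENNReal.add_ne_top]
    have hdlt : EMetric.diam (⇑f '' Metric.closedBall x' r) < b0 / ((n:ℝ≥0∞)+1) := by
      rw [ENNReal.lt_div_iff_mul_lt (Or.inl hne) (Or.inl hnt)]
      rw [mul_comm]; exact hnle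
    set ρ0 : ℝ := (r+s)/2 with hρ0
    have hρ0s : ρ0 < s := by rw [hρ0]; linarith
    have hcpt : IsCompact (Metric.closedBall x' ρ0) := by
      apply hC.of_isClosed_subset Metric.isClosed_closedBall
      exact le_trans (Metric.closedBall_subset_closedBall hρ0s.le) (hsub x' hx'K)
    obtain ⟨ρ, hrρ, hρρ0, hρlt⟩ :=
      exists_diam_image_closedBall_lt f.continuous hr.le (by rw [hρ0]; linarith) hcpt hdlt
    have hρs : ρ < s := lt_of_le_of_lt hρρ0 hρ0s
    have hmul : ((n:ℝ≥0∞)+1) * EMetric.diam (⇑f '' Metric.closedBall x' ρ) < b0 := by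
      have := (ENNReal.lt_div_iff_mul_lt (Or.inl hne) (Or.inl hnt)).mp hρlt
      rwa [mul_comm] at this
    -- real arithmetic
    set β : ℝ := φ (r/2) with hβ
    have hβpos : 0 < β := hφ.2.2.2 _ (by linarith)
    have hfin : EMetric.diam (⇑f '' Metric.closedBall x' ρ) ≠ ⊤ := by
      intro hT
      rw [hT, ENNReal.mul_top hne] at hmul
      exact (not_top_lt : ¬ (⊤:ℝ≥0∞) < b0) hmul
    set Dρ : ℝ := (EMetric.diam (⇑f '' Metric.closedBall x' ρ)).toReal with hDρ
    have hDρ0 : 0 ≤ Dρ := ENNReal.toReal_nonneg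
    have hreal : ((n:ℝ)+1) * Dρ < β := by
      have hb0t : b0 ≠ ⊤ := by rw [hb0]; exact ENNReal.ofReal_ne_top
      have h1 : (((n:ℝ≥0∞)+1) * EMetric.diam (⇑f '' Metric.closedBall x' ρ)).toReal < b0.toReal :=
        (ENNReal.toReal_lt_toReal (ENNReal.mul_ne_top hnt hfin) hb0t).mpr hmul
      rw [ENNReal.toReal_mul, hb0, ENNReal.toReal_ofReal hβpos.le] at h1
      have h2 : ((n:ℝ≥0∞)+1).toReal = (n:ℝ)+1 := by
        rw [ENNReal.toReal_add (ENNReal.natCast_ne_top n) ENNReal.one_ne_top,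
          ENNReal.toReal_natCast, ENNReal.toReal_one]
      rw [h2] at h1
      exact h1
    set η : ℝ := (β - ((n:ℝ)+1) * Dρ) / (4*((n:ℝ)+1)) with hη
    have hηpos : 0 < η := by
      apply div_pos (by linarith) (by positivity)
    refine ⟨η, (ρ - r)/2, hηpos, by linarith, ?_⟩
    intro g hg x'' hx''
    set r' : ℝ := (r + ρ)/2 with hr'
    intro hmem
    have hball : Metric.closedBall x'' r' ⊆ Metric.closedBall x' ρ := by
      intro y hy
      rw [Metric.mem_closedBall] at hy ⊢
      have h2 : dist x'' x' < (ρ - r)/2 := by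
        rw [Subtype.dist_eq, hx'z]; exact hx''
      calc dist y x' ≤ dist y x'' + dist x'' x' := dist_triangle _ _ _
        _ ≤ ρ := by rw [hr'] at hy; linarith
    have hchain : ((n:ℝ≥0∞)+1) * EMetric.diam (⇑g '' Metric.closedBall x'' r') <
        ENNReal.ofReal (φ (r'/2)) := by
      have hd1 : EMetric.diam (⇑g '' Metric.closedBall x'' r') ≤
          EMetric.diam (⇑g '' Metric.closedBall x' ρ) :=
        EMetric.diam_mono (Set.image_mono hball)
      have hd2 : EMetric.diam (⇑g '' Metric.closedBall x' ρ) ≤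
          EMetric.diam (⇑f '' Metric.closedBall x' ρ) + 2 * ENNReal.ofReal η := by
        apply diam_image_perturb
        intro y hy
        rw [dist_comm]
        apply hg
        apply hsub x' hx'K
        exact Metric.closedBall_subset_closedBall (by linarith) hy
      have hstep : ((n:ℝ≥0∞)+1) * (EMetric.diam (⇑f '' Metric.closedBall x' ρ)
          + 2 * ENNReal.ofReal η) < ENNReal.ofReal β := by
        have he1 : ((n:ℝ≥0∞)+1) = ENNReal.ofReal ((n:ℝ)+1) := by
          rw [ENNReal.ofReal_add (by positivity) zero_le_one]
          simp [ENNReal.ofReal_natCast]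
        have he2 : EMetric.diam (⇑f '' Metric.closedBall x' ρ) = ENNReal.ofReal Dρ := by
          rw [hDρ, ENNReal.ofReal_toReal hfin]
        rw [he1, he2]
        have he3 : (2 : ℝ≥0∞) = ENNReal.ofReal 2 := by simp
        rw [he3, ← ENNReal.ofReal_mul (by norm_num), ← ENNReal.ofReal_add hDρ0 (by positivity),
          ← ENNReal.ofReal_mul (by positivity)]
        apply ENNReal.ofReal_lt_ofReal_iff hβpos |>.mpr
        rw [hη]
        have hnn : (0:ℝ) < (n:ℝ)+1 := by positivity
        have hexp : ((n:ℝ)+1) * (Dρ + 2*((β - ((n:ℝ)+1)*Dρ)/(4*((n:ℝ)+1))))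
            = ((n:ℝ)+1)*Dρ + (β - ((n:ℝ)+1)*Dρ)/2 := by
          field_simp
          ring
        rw [hexp]
        linarith [hreal]
      calc ((n:ℝ≥0∞)+1) * EMetric.diam (⇑g '' Metric.closedBall x'' r')
          ≤ ((n:ℝ≥0∞)+1) * (EMetric.diam (⇑f '' Metric.closedBall x' ρ)
            + 2 * ENNReal.ofReal η) := by
            exact mul_le_mul_right (le_trans hd1 hd2) _
        _ < ENNReal.ofReal β := hstep
        _ ≤ ENNReal.ofReal (φ (r'/2)) := by
            apply ENNReal.ofReal_le_ofReal
            apply hφ.1 (by linarith) (by rw [hr']; linarith)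
    have := hmem r' (by rw [hr']; linarith) (by rw [hr']; linarith)
    exact absurd this (not_le.mpr hchain)
  choose ηz δz hηz hδz hclaim using key
  have hcover : D ⊆ ⋃ z : ↥D, Metric.ball (z : EuclideanSpace ℝ (Fin d)) (δz z) := by
    intro x hx
    exact Set.mem_iUnion.mpr ⟨⟨x, hx⟩, Metric.mem_ball_self (hδz _)⟩
  obtain ⟨t, ht⟩ := hDc.elim_finite_subcover _ (fun z => Metric.isOpen_ball) hcover
  by_cases hte : t.Nonempty
  · set η0 : ℝ := min 1 (t.inf' hte ηz) with hη0
    have hη0pos : 0 < η0 := by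
      rw [hη0, lt_min_iff]
      exact ⟨one_pos, Finset.lt_inf'_iff _ |>.mpr (fun i _ => hηz i)⟩
    apply Filter.mem_of_superset (mem_nhds_compactConvergence f hC hη0pos)
    intro g hg
    refine ⟨N, a, b, ?_, hvol⟩
    intro x'' hxA hxK
    by_contra hno
    push_neg at hno
    have hxU : (x'' : EuclideanSpace ℝ (Fin d)) ∉ U := by
      rw [hU]
      intro hmem
      obtain ⟨i, hi⟩ := Set.mem_iUnion.mp hmem
      exact (hno i) hi
    have hxD : (x'' : EuclideanSpace ℝ (Fin d)) ∈ D :=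
      ⟨Set.mem_image_of_mem _ hxK, hxU⟩
    have hmem := ht hxD
    simp only [Set.mem_iUnion] at hmem
    obtain ⟨z, hzt, hzball⟩ := hmem
    have hgz : ∀ y ∈ C, dist (f y) (g y) ≤ ηz z := by
      intro y hy
      have h1 := hg y hy
      have h2 : η0 ≤ ηz z := le_trans (min_le_right _ _) (Finset.inf'_le _ hzt)
      linarith
    have hdist : dist (x'' : EuclideanSpace ℝ (Fin d)) (z : EuclideanSpace ℝ (Fin d)) < δz z :=
      Metric.mem_ball.mp hzball
    exact hclaim z g hgz x'' hdist hxA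
  · -- t empty : D empty
    apply Filter.mem_of_superset (mem_nhds_compactConvergence f hC one_pos)
    intro g hg
    refine ⟨N, a, b, ?_, hvol⟩
    intro x'' hxA hxK
    by_contra hno
    push_neg at hno
    have hxU : (x'' : EuclideanSpace ℝ (Fin d)) ∉ U := by
      rw [hU]
      intro hmem
      obtain ⟨i, hi⟩ := Set.mem_iUnion.mp hmem
      exact (hno i) hi
    have hxD : (x'' : EuclideanSpace ℝ (Fin d)) ∈ D :=
      ⟨Set.mem_image_of_mem _ hxK, hxU⟩
    have := ht hxD
    rw [Finset.not_nonempty_iff_eq_empty] at hte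
    simp [hte] at this

end Core

noncomputable section Dense

set_option maxHeartbeats 1000000 in
lemma dense_UU {d : ℕ} (hd : 0 < d) {φ : ℝ → ℝ} (hφ : IsGauge φ)
    (Ω : Set (EuclideanSpace ℝ (Fin d))) {K : Set ↥Ω} (hK : IsCompact K) {s : ℝ} (hs : 0 < s)
    (n : ℕ) {ε : ℝ} (hε : 0 < ε) :
    Dense (UU φ Ω K n s ε) := by
  rw [dense_iff_inter_open]
  rintro V hVo ⟨f, hfV⟩
  obtain ⟨L, hL, η, hη, hbase⟩ := exists_compactConvergence_subset f (hVo.mem_nhds hfV)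
  -- bounding radius
  obtain ⟨R0, hR0⟩ := (hK.image continuous_subtype_val).union
    (hL.image continuous_subtype_val) |>.isBounded.subset_closedBall 0
  set R : ℝ := max R0 1 with hR
  have hR1 : (1:ℝ) ≤ R := le_max_right _ _
  have hKL : (Subtype.val '' K) ∪ (Subtype.val '' L) ⊆ Metric.closedBall 0 R :=
    le_trans hR0 (Metric.closedBall_subset_closedBall (le_max_left _ _))
  -- Tietze extension of `f` from `val '' L`
  set Lc : Set (EuclideanSpace ℝ (Fin d)) := Subtype.val '' L with hLc
  have hLcc : IsClosed Lc := (hL.image continuous_subtype_val).isClosed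
  have hLcΩ : Lc ⊆ Ω := by rintro y ⟨x, _, rfl⟩; exact x.2
  set inc : C(↥Lc, ↥Ω) := ⟨fun y => ⟨y.1, hLcΩ y.2⟩,
    Continuous.subtype_mk continuous_subtype_val _⟩ with hinc
  obtain ⟨F, hF⟩ := ContinuousMap.exists_restrict_eq hLcc (f.comp inc)
  have hFval : ∀ y : ↥Lc, F y.1 = f (inc y) := fun y => DFunLike.congr_fun hF y
  -- uniform continuity of F on a large ball
  have hUC := (isCompact_closedBall (0 : EuclideanSpace ℝ (Fin d)) (R+2)).uniformContinuousOn_of_continuous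
    F.continuous.continuousOn
  rw [Metric.uniformContinuousOn_iff] at hUC
  obtain ⟨δ0, hδ0, hδ0p⟩ := hUC (η/2) (by linarith)
  -- parameters
  set ρ : ℝ := min (1/(Real.sqrt d + 1)) (δ0/(4*(Real.sqrt d + 1))) with hρ
  have hsd : (0:ℝ) ≤ Real.sqrt d := Real.sqrt_nonneg _
  have hρpos : 0 < ρ := lt_min (by positivity) (by positivity)
  have hρ1 : ρ ≤ 1 := le_trans (min_le_left _ _) (by
    rw [div_le_one (by positivity)]; linarith)
  have hρδ : 2*ρ*Real.sqrt d < δ0 := by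
    have h1 : ρ ≤ δ0/(4*(Real.sqrt d + 1)) := min_le_right _ _
    have h2 : 2*ρ*Real.sqrt d ≤ 2*(δ0/(4*(Real.sqrt d + 1)))*Real.sqrt d := by
      apply mul_le_mul_of_nonneg_right _ hsd
      linarith
    have h3 : 2*(δ0/(4*(Real.sqrt d + 1)))*Real.sqrt d < δ0 := by
      have hq : δ0/(4*(Real.sqrt d + 1)) * (4*(Real.sqrt d + 1)) = δ0 := by field_simp
      have hqpos : 0 < δ0/(4*(Real.sqrt d + 1)) := by positivity
      nlinarith [mul_nonneg hqpos.le hsd]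
    linarith
  have hρ2 : 2*ρ*Real.sqrt d ≤ 2 := by
    have h1 : ρ ≤ 1/(Real.sqrt d + 1) := min_le_left _ _
    have h2 : 2*ρ*Real.sqrt d ≤ 2*(1/(Real.sqrt d + 1))*Real.sqrt d := by
      apply mul_le_mul_of_nonneg_right _ hsd
      linarith
    have h3 : 2*(1/(Real.sqrt d + 1))*Real.sqrt d ≤ 2 := by
      have hq : (1:ℝ)/(Real.sqrt d + 1) * (Real.sqrt d + 1) = 1 := by field_simp
      have hqpos : (0:ℝ) < 1/(Real.sqrt d + 1) := by positivity
      nlinarith [mul_nonneg hqpos.le hsd]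
    linarith
  set M : ℕ := ⌈(R+1)/ρ⌉₊ with hM
  have hMle : (R+1)/ρ ≤ (M:ℝ) := Nat.le_ceil _
  set N : ℕ := d * (2*M+1) with hN
  set P : ℝ := (2*R+2)^(d-1) with hP
  have hPpos : 0 < P := by positivity
  set w : ℝ := min (ρ/2) (ε^(N+1)/(3*P+1)) with hw
  have hwpos : 0 < w := lt_min (by positivity) (by positivity)
  have hwρ : w ≤ ρ := le_trans (min_le_left _ _) (by linarith)
  have hw1 : w ≤ 1 := le_trans hwρ hρ1
  -- the perturbed function
  set g : C(↥Ω, ℝ) := ⟨fun x => F (psi d ρ w M (x : EuclideanSpace ℝ (Fin d))),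
    F.continuous.comp ((continuous_psi ρ w M).comp continuous_subtype_val)⟩ with hg
  -- g is close to f on L
  have hgL : ∀ x ∈ L, dist (f x) (g x) < η := by
    intro x hx
    have hxLc : (x : EuclideanSpace ℝ (Fin d)) ∈ Lc := Set.mem_image_of_mem _ hx
    have hfx : f x = F (x : EuclideanSpace ℝ (Fin d)) := by
      have := hFval ⟨(x : EuclideanSpace ℝ (Fin d)), hxLc⟩
      rw [this]
      congr 1
    have hxR : ‖(x : EuclideanSpace ℝ (Fin d))‖ ≤ R := by
      have := hKL (Set.mem_union_right _ hxLc)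
      rwa [Metric.mem_closedBall, dist_zero_right] at this
    have hdp : dist (psi d ρ w M (x:EuclideanSpace ℝ (Fin d))) (x:EuclideanSpace ℝ (Fin d)) ≤
        2*ρ*Real.sqrt d := dist_psi_le hρpos hwpos hwρ hMle _ hxR
    have h1 : (x : EuclideanSpace ℝ (Fin d)) ∈ Metric.closedBall 0 (R+2) := by
      rw [Metric.mem_closedBall, dist_zero_right]; linarith
    have h2 : psi d ρ w M (x:EuclideanSpace ℝ (Fin d)) ∈ Metric.closedBall 0 (R+2) := by
      rw [Metric.mem_closedBall, dist_zero_right]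
      calc ‖psi d ρ w M (x:EuclideanSpace ℝ (Fin d))‖
          ≤ ‖(x:EuclideanSpace ℝ (Fin d))‖ + dist (psi d ρ w M (x:EuclideanSpace ℝ (Fin d))) (x:EuclideanSpace ℝ (Fin d)) := by
            rw [dist_eq_norm]
            have := norm_add_le ((x:EuclideanSpace ℝ (Fin d)))
              (psi d ρ w M (x:EuclideanSpace ℝ (Fin d)) - (x:EuclideanSpace ℝ (Fin d)))
            simp only [add_sub_cancel] at this
            linarith
        _ ≤ R + 2 := by linarith
    have h3 : dist ((x:EuclideanSpace ℝ (Fin d))) (psi d ρ w M (x:EuclideanSpace ℝ (Fin d))) < δ0 := by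
      rw [dist_comm]; linarith
    have h4 := hδ0p _ h1 _ h2 h3
    rw [hfx]
    calc dist (F (x:EuclideanSpace ℝ (Fin d))) (g x)
        = dist (F (x:EuclideanSpace ℝ (Fin d))) (F (psi d ρ w M (x:EuclideanSpace ℝ (Fin d)))) := rfl
      _ < η/2 := h4
      _ < η := by linarith
  -- g is in UU
  have hgU : g ∈ UU φ Ω K n s ε := by
    have hdiv : ∀ i : Fin N, i.1 / (2*M+1) < d := by
      intro i
      apply Nat.div_lt_of_lt_mul
      calc i.1 < N := i.2
        _ = (2*M+1)*d := by rw [hN]; ring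
    set jf : Fin N → Fin d := fun i => ⟨i.1 / (2*M+1), hdiv i⟩ with hjfdef
    set k0 : Fin N → ℤ := fun i => ((i.1 % (2*M+1) : ℕ) : ℤ) - (M:ℤ) with hk0def
    set aa : Fin N → Fin d → ℝ :=
      fun i j => if j = jf i then (k0 i : ℝ)*ρ - 2*w else -(R+1) with haa
    set bb : Fin N → Fin d → ℝ :=
      fun i j => if j = jf i then (k0 i : ℝ)*ρ + w else R+1 with hbb
    refine ⟨N, aa, bb, ?_, ?_⟩
    · -- covering
      intro x hxA hxK
      have hxR : ‖(x : EuclideanSpace ℝ (Fin d))‖ ≤ R := by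
        have := hKL (Set.mem_union_left _ (Set.mem_image_of_mem _ hxK))
        rwa [Metric.mem_closedBall, dist_zero_right] at this
      have hcoordR : ∀ j : Fin d, |(x : EuclideanSpace ℝ (Fin d)) j| ≤ R :=
        fun j => le_trans (abs_coord_le_norm _ j) hxR
      by_cases hcore : ∀ j : Fin d, ∃ k : ℤ,
          (x : EuclideanSpace ℝ (Fin d)) j ∈ Set.Ioo ((k:ℝ)*ρ) (((k:ℝ)+1)*ρ - w)
      · exfalso
        choose kk hkk using hcore
        haveI : Nonempty (Fin d) := ⟨⟨0, hd⟩⟩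
        set mrg : Fin d → ℝ := fun j => min ((x:EuclideanSpace ℝ (Fin d)) j - (kk j : ℝ)*ρ)
          (((kk j : ℝ)+1)*ρ - w - (x:EuclideanSpace ℝ (Fin d)) j) with hmrgdef
        have hmrg : ∀ j, 0 < mrg j := by
          intro j
          exact lt_min (by linarith [(hkk j).1]) (by linarith [(hkk j).2])
        set r0 : ℝ := min (s/2) (Finset.univ.inf' Finset.univ_nonempty mrg) with hr0def
        have hr0 : 0 < r0 :=
          lt_min (by linarith) ((Finset.lt_inf'_iff _).mpr (fun j _ => hmrg j))
        have hr0s : r0 < s := lt_of_le_of_lt (min_le_left _ _) (by linarith)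
        have hconst : ∀ y : ↥Ω, y ∈ Metric.closedBall x r0 → g y = g x := by
          intro y hy
          have hd1 : dist y x ≤ r0 := Metric.mem_closedBall.mp hy
          have hcoord : ∀ j : Fin d,
              theta ρ w M ((y:EuclideanSpace ℝ (Fin d)) j) =
              theta ρ w M ((x:EuclideanSpace ℝ (Fin d)) j) := by
            intro j
            have hd2 : |(y:EuclideanSpace ℝ (Fin d)) j - (x:EuclideanSpace ℝ (Fin d)) j| ≤ r0 := by
              apply le_trans (abs_coord_le_dist _ _ j)
              rw [← Subtype.dist_eq]
              exact hd1
            have hm1 : r0 ≤ mrg j :=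
              le_trans (min_le_right _ _) (Finset.inf'_le _ (Finset.mem_univ j))
            have hm2 := abs_le.mp hd2
            have hm3 : mrg j ≤ (x:EuclideanSpace ℝ (Fin d)) j - (kk j : ℝ)*ρ := min_le_left _ _
            have hm4 : mrg j ≤ ((kk j : ℝ)+1)*ρ - w - (x:EuclideanSpace ℝ (Fin d)) j :=
              min_le_right _ _
            apply theta_const_on_core hρpos.le hwpos.le M (kk j)
            · constructor <;> linarith
            · exact ⟨(hkk j).1.le, (hkk j).2.le⟩
          have hpsi : psi d ρ w M (y:EuclideanSpace ℝ (Fin d)) =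
              psi d ρ w M (x:EuclideanSpace ℝ (Fin d)) := by
            unfold psi
            exact congrArg _ (funext fun j => hcoord j)
          show F (psi d ρ w M (y:EuclideanSpace ℝ (Fin d))) =
            F (psi d ρ w M (x:EuclideanSpace ℝ (Fin d)))
          rw [hpsi]
        apply absurd (hxA r0 hr0 hr0s)
        rw [not_le]
        have hsub1 : ⇑g '' Metric.closedBall x r0 ⊆ {g x} := by
          rintro _ ⟨y, hy, rfl⟩
          exact hconst y hy
        have hdiam0 : EMetric.diam (⇑g '' Metric.closedBall x r0) = 0 := by
          apply le_antisymm _ zero_le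
          calc EMetric.diam (⇑g '' Metric.closedBall x r0) ≤ EMetric.diam {g x} :=
                EMetric.diam_mono hsub1
            _ = 0 := EMetric.diam_singleton
        rw [hdiam0, mul_zero]
        exact ENNReal.ofReal_pos.mpr (hφ.2.2.2 _ (by linarith))
      · push_neg at hcore
        obtain ⟨j, hj⟩ := hcore
        obtain ⟨k, hkM1, hkM2, hk1, hk2⟩ :=
          exists_slab hρpos hwpos hw1 hMle (hcoordR j) hj
        set i0 : ℕ := (2*M+1) * j.1 + (k + M).toNat with hi0def
        have hkt : (k + M).toNat < 2*M+1 := by omega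
        have hi0 : i0 < N := by
          rw [hN]
          calc i0 < (2*M+1) * j.1 + (2*M+1) := by omega
            _ = (2*M+1) * (j.1+1) := by ring
            _ ≤ (2*M+1) * d := Nat.mul_le_mul_left _ j.2
            _ = d * (2*M+1) := mul_comm _ _
        set i : Fin N := ⟨i0, hi0⟩ with hidef
        have hjf : jf i = j := by
          apply Fin.ext
          show i0 / (2*M+1) = j.1
          rw [hi0def, Nat.mul_add_div (by omega), Nat.div_eq_of_lt hkt, add_zero]
        have hk0 : k0 i = k := by
          show ((i0 % (2*M+1) : ℕ) : ℤ) - (M:ℤ) = k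
          have e : i0 = (k + M).toNat + (2*M+1)*j.1 := by rw [hi0def]; ring
          rw [e, Nat.add_mul_mod_self_left, Nat.mod_eq_of_lt hkt]
          have h9 : ((k + M).toNat : ℤ) = k + M := Int.toNat_of_nonneg (by omega)
          rw [h9]
          ring
        refine ⟨i, ?_⟩
        intro j'
        by_cases hj' : j' = jf i
        · have ha : aa i j' = (k:ℝ)*ρ - 2*w := by rw [hj', haa]; simp [hk0]
          have hb : bb i j' = (k:ℝ)*ρ + w := by rw [hj', hbb]; simp [hk0]
          rw [Set.mem_Ioo, ha, hb, hj', hjf]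
          exact ⟨by linarith, by linarith⟩
        · simp only [haa, hbb, if_neg hj']
          have := abs_le.mp (hcoordR j')
          exact ⟨by linarith [this.1], by linarith [this.2]⟩
    · -- volumes
      intro i
      rw [volume_ABox]
      have hfac : ∀ j : Fin d, ENNReal.ofReal (bb i j - aa i j) =
          if j = jf i then ENNReal.ofReal (3*w) else ENNReal.ofReal (2*R+2) := by
        intro j
        by_cases hj : j = jf i
        · rw [if_pos hj]
          simp only [haa, hbb, if_pos hj]
          congr 1
          ring
        · rw [if_neg hj]
          simp only [haa, hbb, if_neg hj]
          congr 1
          ring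
      have hprod : ∏ j : Fin d, ENNReal.ofReal (bb i j - aa i j) =
          ENNReal.ofReal (3*w) * ENNReal.ofReal (2*R+2) ^ (d-1) := by
        rw [Finset.prod_congr rfl (fun j _ => hfac j),
          ← Finset.mul_prod_erase Finset.univ _ (Finset.mem_univ (jf i)), if_pos rfl]
        congr 1
        rw [Finset.prod_congr rfl (fun j hj => if_neg (Finset.ne_of_mem_erase hj)),
          Finset.prod_const, Finset.card_erase_of_mem (Finset.mem_univ _),
          Finset.card_univ, Fintype.card_fin]
      rw [hprod, ← ENNReal.ofReal_pow (by linarith), ← ENNReal.ofReal_mul (by positivity)]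
      apply ENNReal.ofReal_le_ofReal
      have hw2 : w * (3*P+1) ≤ ε^(N+1) := by
        have h1 : w ≤ ε^(N+1)/(3*P+1) := min_le_right _ _
        rwa [le_div_iff₀ (by positivity)] at h1
      calc 3*w*(2*R+2)^(d-1) = 3*w*P := by rw [hP]
        _ ≤ ε^(N+1) := by nlinarith [hwpos.le, hPpos.le]
  exact ⟨g, hbase hgL, hgU⟩

end Dense

theorem stmt18
    (d : ℕ) (hd : 0 < d) (Ω : Set (EuclideanSpace ℝ (Fin d)))
    (hΩ : LocallyCompactSpace Ω) (φ : ℝ → ℝ) (hφ : IsGauge φ) :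
    ∀ᶠ f : C(↥Ω, ℝ) in residual C(↥Ω, ℝ),
      Microscopic {x : EuclideanSpace ℝ (Fin d) | ∃ hx : x ∈ Ω, 0 < lipGauge φ (⇑f) ⟨x, hx⟩} := by
  haveI := hΩ
  haveI : SigmaCompactSpace ↥Ω := inferInstance
  set Kc : ℕ → Set ↥Ω := compactCovering ↥Ω with hKcdef
  have hKc : ∀ p, IsCompact (Kc p) := fun p => isCompact_compactCovering ↥Ω p
  have hKcov : ∀ x : ↥Ω, ∃ p, x ∈ Kc p := by
    intro x
    have : x ∈ ⋃ p, Kc p := by rw [hKcdef, iUnion_compactCovering]; trivial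
    exact Set.mem_iUnion.mp this
  have hballs : ∀ p, ∃ s, 0 < s ∧ ∃ C, IsCompact C ∧ ∀ x ∈ Kc p, Metric.closedBall x s ⊆ C :=
    fun p => exists_ball_compact (hKc p)
  choose sf hsf Cf hCf hCsub using hballs
  set sc : ℕ → ℕ → ℝ := fun p m => min (sf p) (1/(m+1)) with hsc
  have hscpos : ∀ p m, 0 < sc p m := fun p m => lt_min (hsf p) (by positivity)
  have hres : ∀ p n m q : ℕ, UU φ Ω (Kc p) n (sc p m) (1/(q+2)) ∈ residual C(↥Ω, ℝ) := by
    intro p n m q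
    apply residual_of_dense_open
    · apply isOpen_UU hφ Ω (hKc p) (hCf p) (hscpos p m) _ n _
      intro x hx
      exact subset_trans (Metric.closedBall_subset_closedBall (min_le_left _ _)) (hCsub p x hx)
    · exact dense_UU hd hφ Ω (hKc p) (hscpos p m) n (by positivity)
  have hbig : (⋂ p : ℕ, ⋂ n : ℕ, ⋂ m : ℕ, ⋂ q : ℕ, UU φ Ω (Kc p) n (sc p m) (1/(q+2)))
      ∈ residual C(↥Ω, ℝ) := by
    rw [countable_iInter_mem]; intro p
    rw [countable_iInter_mem]; intro n
    rw [countable_iInter_mem]; intro m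
    rw [countable_iInter_mem]; intro q
    exact hres p n m q
  apply Filter.mem_of_superset hbig
  intro f hf
  simp only [Set.mem_iInter] at hf
  -- the assembly
  intro ε hε
  set ε' : ℝ := min ε (1/2) with hε'def
  have hε'0 : 0 < ε' := lt_min hε (by norm_num)
  have hε'1 : ε' ≤ 1/2 := min_le_right _ _
  have hε'ε : ε' ≤ ε := min_le_left _ _
  set e : ℕ ≃ ℕ × ℕ × ℕ := (Denumerable.eqv (ℕ × ℕ × ℕ)).symm with hedef
  have hqsel : ∀ k : ℕ, ∃ q : ℕ, (1:ℝ)/(q+2) ≤ ε' ^ (2^(k+1)) := by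
    intro k
    obtain ⟨q, hq⟩ := exists_nat_one_div_lt (show (0:ℝ) < ε' ^ (2^(k+1)) by positivity)
    refine ⟨q, le_trans ?_ hq.le⟩
    apply div_le_div_of_nonneg_left (by norm_num) (by positivity) (by push_cast; linarith)
  choose qsel hqselp using hqsel
  have hexists : ∀ k : ℕ, ∃ (N : ℕ) (a b : Fin N → Fin d → ℝ),
      (∀ x : ↥Ω, x ∈ ASet φ (⇑f) (e k).2.1 (sc (e k).1 (e k).2.2) → x ∈ Kc (e k).1 →
        ∃ i, (x : EuclideanSpace ℝ (Fin d)) ∈ OBox (a i) (b i)) ∧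
      ∀ i, MeasureTheory.volume (ABox (a i) (b i)) ≤
        ENNReal.ofReal ((1/((qsel k : ℝ)+2)) ^ (N+1)) :=
    fun k => hf (e k).1 (e k).2.1 (e k).2.2 (qsel k)
  choose Nf af bf hcov hvol using hexists
  -- decoding
  set kk : ℕ → ℕ := fun j => (j+1).factorization 2 with hkkdef
  set uu : ℕ → ℕ := fun j => (j+1) / 2^(kk j) with huudef
  set ii : ℕ → ℕ := fun j => (uu j - 1)/2 with hiidef
  set B : ℕ → Set (EuclideanSpace ℝ (Fin d)) := fun j =>
    if h : ii j < Nf (kk j) then ABox (af (kk j) ⟨ii j, h⟩) (bf (kk j) ⟨ii j, h⟩)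
    else ABox (fun _ => 1) (fun _ => 0) with hBdef
  refine ⟨B, ?_, ?_, ?_⟩
  · intro j
    simp only [hBdef]
    split_ifs <;> exact isBox_ABox _ _
  · -- covering
    rintro x ⟨hx, hlip⟩
    obtain ⟨p, hp⟩ := hKcov ⟨x, hx⟩
    obtain ⟨n, δ, hδ, hmem⟩ := lip_pos_mem_ASet hφ hlip
    obtain ⟨m, hm⟩ := exists_nat_one_div_lt hδ
    have hmem' : (⟨x, hx⟩ : ↥Ω) ∈ ASet φ (⇑f) n (sc p m) := by
      apply ASet_mono φ (⇑f) n _ hmem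
      exact le_trans (min_le_right _ _) hm.le
    set k : ℕ := e.symm (p, n, m) with hkdef
    have he : e k = (p, n, m) := e.apply_symm_apply _
    have hcovk := hcov k
    rw [he] at hcovk
    obtain ⟨i, hi⟩ := hcovk ⟨x, hx⟩ hmem' hp
    set j : ℕ := 2^k * (2*i.1+1) - 1 with hjdef
    have hj1 : j + 1 = 2^k * (2*i.1+1) := by
      have h2 : 0 < 2^k * (2*i.1+1) := by positivity
      omega
    have hkkj : kk j = k := by
      rw [hkkdef]
      simp only [hj1]
      rw [Nat.factorization_mul (show (2:ℕ)^k ≠ 0 from (pow_pos two_pos k).ne')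
        (show 2*i.1+1 ≠ 0 by omega)]
      rw [Nat.Prime.factorization_pow Nat.prime_two]
      simp [Nat.factorization_eq_zero_of_not_dvd (show ¬ (2:ℕ) ∣ 2*i.1+1 by omega)]
    have huuj : uu j = 2*i.1+1 := by
      rw [huudef]
      simp only [hj1, hkkj]
      exact Nat.mul_div_cancel_left _ (pow_pos two_pos k)
    have hiij : ii j = i.1 := by
      rw [hiidef]
      simp only [huuj]
      omega
    apply Set.mem_iUnion.mpr ⟨j, ?_⟩
    have key : ∀ (K I : ℕ) (hK : K = k) (hI : I = i.1) (h : I < Nf K),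
        (x : EuclideanSpace ℝ (Fin d)) ∈ ABox (af K ⟨I, h⟩) (bf K ⟨I, h⟩) := by
      intro K I hK hI h
      subst hK; subst hI
      have heq : (⟨i.1, h⟩ : Fin (Nf k)) = i := Fin.ext rfl
      rw [heq]
      exact OBox_subset_ABox _ _ hi
    simp only [hBdef]
    have hlt : ii j < Nf (kk j) := by rw [hiij, hkkj]; exact i.2
    rw [dif_pos hlt]
    exact key _ _ hkkj hiij hlt
  · -- volume bounds
    intro j
    simp only [hBdef]
    split_ifs with h
    · calc MeasureTheory.volume (ABox (af (kk j) ⟨ii j, h⟩) (bf (kk j) ⟨ii j, h⟩))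
          ≤ ENNReal.ofReal ((1/((qsel (kk j) : ℝ)+2)) ^ (Nf (kk j)+1)) := hvol _ _
        _ ≤ ENNReal.ofReal (ε ^ (j+1)) := by
            apply ENNReal.ofReal_le_ofReal
            have h1 : (1/((qsel (kk j) : ℝ)+2)) ^ (Nf (kk j)+1) ≤
                (ε' ^ (2^(kk j+1))) ^ (Nf (kk j)+1) :=
              pow_le_pow_left₀ (by positivity) (hqselp (kk j)) _
            rw [← pow_mul] at h1
            have hj2 : j + 1 ≤ 2^(kk j+1) * (Nf (kk j)+1) := by
              have hsplit : 2^(kk j) * uu j = j+1 :=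
                Nat.ordProj_mul_ordCompl_eq_self (j+1) 2
              have hodd : ¬ (2 ∣ uu j) := Nat.not_dvd_ordCompl Nat.prime_two (by omega)
              have huv : uu j = 2 * ii j + 1 := by
                simp only [hiidef]
                omega
              have : uu j ≤ 2 * Nf (kk j) + 1 := by omega
              calc j + 1 = 2^(kk j) * uu j := hsplit.symm
                _ ≤ 2^(kk j) * (2 * (Nf (kk j) + 1)) := Nat.mul_le_mul_left _ (by omega)
                _ = 2^(kk j + 1) * (Nf (kk j)+1) := by ring
            have h2 : ε' ^ (2^(kk j+1) * (Nf (kk j)+1)) ≤ ε' ^ (j+1) :=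
              pow_le_pow_of_le_one hε'0.le (by linarith) hj2
            have h3 : ε' ^ (j+1) ≤ ε ^ (j+1) := pow_le_pow_left₀ hε'0.le hε'ε _
            linarith
    · rw [ABox_one_zero_empty hd]
      simp
end

section
/- Let d be a positive integer and let Ω ⊆ ℝ^d be a locally compact set. Then for a typical function f ∈ C(Ω), the graph of f, {(x, f(x)) : x ∈ Ω} ⊆ ℝ^{d+1}, is microscopic in ℝ^{d+1}. -/
open Filter Set Topology MeasureTheory
open scoped ENNReal NNReal

noncomputable section StmtAux


abbrev Euc (k : ℕ) := EuclideanSpace ℝ (Fin k)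

def boxOf {k : ℕ} (a b : Fin k → ℝ) : Set (Euc k) :=
  {x | ∀ i, x i ∈ Set.Icc (a i) (b i)}

lemma volBox {k : ℕ} (a b : Fin k → ℝ) :
    volume (boxOf a b) = ∏ i, ENNReal.ofReal (b i - a i) := by
  have hmp := (EuclideanSpace.volume_preserving_symm_measurableEquiv_toLp (Fin k)).symm
  have hmeas : MeasurableSet (boxOf a b) := by
    have : boxOf a b = ⋂ i, (fun x : Euc k => x i) ⁻¹' Set.Icc (a i) (b i) := by
      ext x; simp [boxOf]
    rw [this]
    exact MeasurableSet.iInter fun i =>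
      (measurableSet_Icc).preimage (EuclideanSpace.proj i).continuous.measurable
  have := hmp.measure_preimage hmeas.nullMeasurableSet
  rw [← this]
  have hset : (MeasurableEquiv.toLp 2 (Fin k → ℝ)).symm.symm ⁻¹' boxOf a b = Set.Icc a b := by
    ext x
    simp only [Set.mem_preimage, boxOf, Set.mem_setOf_eq, Set.mem_Icc, Pi.le_def]
    constructor
    · intro h; exact ⟨fun i => (h i).1, fun i => (h i).2⟩
    · intro h i; exact ⟨h.1 i, h.2 i⟩
  rw [hset, Real.volume_Icc_pi]

lemma abs_coord_le_norm_s19 {k : ℕ} (x : Euc k) (i : Fin k) : |x i| ≤ ‖x‖ := by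
  rw [EuclideanSpace.norm_eq]
  have h1 : |x i| = Real.sqrt (|x i|^2) := by
    rw [Real.sqrt_sq_eq_abs, abs_abs]
  rw [h1]
  apply Real.sqrt_le_sqrt
  exact Finset.single_le_sum (f := fun j => ‖x j‖^2) (fun j _ => sq_nonneg _) (Finset.mem_univ i)

lemma euc_dist_le {k : ℕ} (x y : Euc k) {cc : ℝ} (hc : 0 ≤ cc)
    (h : ∀ i, |x i - y i| ≤ cc) : dist x y ≤ k * cc := by
  rw [EuclideanSpace.dist_eq]
  have h1 : ∑ i, dist (x i) (y i) ^ 2 ≤ (k : ℝ) * cc ^ 2 := by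
    calc ∑ i, dist (x i) (y i) ^ 2 ≤ ∑ _i : Fin k, cc ^ 2 := by
          apply Finset.sum_le_sum
          intro i _
          have := h i
          rw [Real.dist_eq]
          nlinarith [abs_nonneg (x i - y i)]
      _ = (k:ℝ) * cc ^ 2 := by simp [mul_comm]
  calc Real.sqrt (∑ i, dist (x i) (y i) ^ 2) ≤ Real.sqrt ((k:ℝ) * cc^2) := Real.sqrt_le_sqrt h1
    _ ≤ Real.sqrt (((k:ℝ) * cc)^2) := by
        apply Real.sqrt_le_sqrt
        have hkk : (k:ℝ) ≤ (k:ℝ)^2 := by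
          have := Nat.le_self_pow (two_ne_zero) k
          exact_mod_cast this
        nlinarith [sq_nonneg cc]
    _ = (k:ℝ) * cc := Real.sqrt_sq (by positivity)

def stairAux (w' v : ℝ) : ℝ := -v + max 0 (min 1 ((v - 1 + w') / w'))

def stair (δ w t : ℝ) : ℝ := t + δ * stairAux (w / δ) (Int.fract (t / δ))

lemma stairAux_cont (w' : ℝ) (hw : 0 < w') : Continuous (stairAux w') := by
  unfold stairAux; fun_prop

lemma stair_continuous {δ w : ℝ} (hδ : 0 < δ) (hw : 0 < w) (hwδ : w ≤ δ) :
    Continuous (stair δ w) := by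
  have h0 : stairAux (w/δ) 0 = 0 := by
    have h1 : (0 - 1 + w/δ) / (w/δ) ≤ 0 := by
      apply div_nonpos_of_nonpos_of_nonneg
      · have : w/δ ≤ 1 := (div_le_one hδ).2 hwδ
        linarith
      · positivity
    simp only [stairAux, neg_zero, zero_add]
    rw [min_eq_right (le_trans h1 zero_le_one), max_eq_left h1]
  have h1 : stairAux (w/δ) 1 = 0 := by
    have hne : w/δ ≠ 0 := by positivity
    simp [stairAux, div_self hne]
  have hc : Continuous (stairAux (w/δ) ∘ Int.fract) :=
    ContinuousOn.comp_fract'' ((stairAux_cont _ (by positivity)).continuousOn) (by rw [h0, h1])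
  have h2 : Continuous fun t : ℝ => stairAux (w/δ) (Int.fract (t/δ)) :=
    hc.comp (continuous_id.div_const δ)
  unfold stair
  exact continuous_id.add (continuous_const.mul h2)

lemma stairAux_bound (w' v : ℝ) (hv : 0 ≤ v) (hv1 : v ≤ 1) : |stairAux w' v| ≤ 1 := by
  unfold stairAux
  have h1 : (0:ℝ) ≤ max 0 (min 1 ((v - 1 + w') / w')) := le_max_left _ _
  have h2 : max 0 (min 1 ((v - 1 + w') / w')) ≤ 1 :=
    max_le zero_le_one (min_le_left _ _)
  rw [abs_le]; constructor <;> nlinarith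

lemma stair_dist {δ w : ℝ} (hδ : 0 < δ) (t : ℝ) : |stair δ w t - t| ≤ δ := by
  unfold stair
  rw [add_sub_cancel_left, abs_mul, abs_of_pos hδ]
  calc δ * |stairAux (w/δ) (Int.fract (t/δ))| ≤ δ * 1 := by
        apply mul_le_mul_of_nonneg_left _ hδ.le
        exact stairAux_bound _ _ (Int.fract_nonneg _) (Int.fract_lt_one _).le
    _ = δ := mul_one δ

lemma stair_eq_grid {δ w t : ℝ} (hδ : 0 < δ) (hw : 0 < w)
    (h : Int.fract (t / δ) ≤ 1 - w / δ) :
    stair δ w t = δ * (⌊t / δ⌋ : ℤ) := by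
  have harg : (Int.fract (t/δ) - 1 + w/δ) / (w/δ) ≤ 0 := by
    apply div_nonpos_of_nonpos_of_nonneg
    · linarith
    · positivity
  have : stairAux (w/δ) (Int.fract (t/δ)) = -Int.fract (t/δ) := by
    unfold stairAux
    rw [min_eq_right (le_trans harg zero_le_one), max_eq_left harg, add_zero]
  rw [stair, this, Int.fract]
  have hδ' : δ ≠ 0 := hδ.ne'
  field_simp
  ring

lemma nbhd_mem {α : Type*} [TopologicalSpace α] (f : C(α, ℝ)) {K : Set α}
    (hK : IsCompact K) {η : ℝ} (hη : 0 < η) :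
    {g : C(α, ℝ) | ∀ x ∈ K, dist (f x) (g x) < η} ∈ 𝓝 f := by
  have hb := nhds_basis_uniformity' (ContinuousMap.hasBasis_compactConvergenceUniformity
    (α := α) (β := ℝ)) (x := f)
  apply hb.mem_of_mem (i := (K, {p : ℝ × ℝ | dist p.1 p.2 < η}))
  exact ⟨hK, Metric.dist_mem_uniformity hη⟩

lemma mem_closure_char {α : Type*} [TopologicalSpace α] (f : C(α, ℝ)) (U : Set C(α, ℝ))
    (h : ∀ (K : Set α), IsCompact K → ∀ η : ℝ, 0 < η →
      ∃ g ∈ U, ∀ x ∈ K, dist (f x) (g x) < η) :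
    f ∈ closure U := by
  have hb := nhds_basis_uniformity' (ContinuousMap.hasBasis_compactConvergenceUniformity
    (α := α) (β := ℝ)) (x := f)
  rw [mem_closure_iff_nhds_basis hb]
  rintro ⟨K, V⟩ ⟨hK, hV⟩
  obtain ⟨η, hη, hηV⟩ := Metric.mem_uniformity_dist.1 hV
  obtain ⟨g, hgU, hg⟩ := h K hK η hη
  exact ⟨g, hgU, fun x hx => hηV (hg x hx)⟩

lemma exists_getD {α : Type*} (l : List α) (x : α) (hx : x ∈ l) (dflt : α) :
    ∃ n, l.getD n dflt = x := by
  obtain ⟨n, hn, he⟩ := List.mem_iff_getElem.1 hx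
  exact ⟨n, by rw [List.getD_eq_getElem l dflt hn]; exact he⟩

variable {d : ℕ}

def USet (Ω : Set (Euc d)) (K : Set ↥Ω) (c : ℕ → ℕ) (θ : ℝ) : Set C(↥Ω, ℝ) :=
  {f | ∃ (a b : ℕ → Fin (d+1) → ℝ) (ρ : ℝ), 0 < ρ ∧
    (∀ n, volume (boxOf (a n) (b n)) ≤ ENNReal.ofReal (θ ^ (c n))) ∧
    (∀ x ∈ K, ∀ y : ℝ, |y - f x| ≤ ρ →
      ∃ n, ∀ i, (Fin.snoc (x : Euc d) y : Fin (d+1) → ℝ) i ∈ Set.Icc (a n i) (b n i))}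

lemma isOpen_USet (Ω : Set (Euc d)) (K : Set ↥Ω) (hK : IsCompact K) (c : ℕ → ℕ) (θ : ℝ) :
    IsOpen (USet Ω K c θ) := by
  rw [isOpen_iff_mem_nhds]
  rintro f ⟨a, b, ρ, hρ, hvol, hcov⟩
  apply Filter.mem_of_superset (nbhd_mem f hK (half_pos hρ))
  intro g hg
  refine ⟨a, b, ρ/2, half_pos hρ, hvol, ?_⟩
  intro x hx y hy
  apply hcov x hx
  have h1 : dist (f x) (g x) < ρ/2 := hg x hx
  rw [Real.dist_eq] at h1
  have : |y - f x| ≤ |y - g x| + |g x - f x| := abs_sub_le _ _ _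
  rw [abs_sub_comm (g x)] at this
  linarith


variable {d : ℕ}

def plateauBoxA (d : ℕ) (L κ v : ℝ) : Fin (d+1) → ℝ := Fin.snoc (fun _ => -(L+1)) (v - κ)
def plateauBoxB (d : ℕ) (L κ v : ℝ) : Fin (d+1) → ℝ := Fin.snoc (fun _ => (L+1)) (v + κ)
def slabBoxA (d : ℕ) (L M w δ : ℝ) (i0 : Fin d) (k : ℤ) : Fin (d+1) → ℝ :=
  Fin.snoc (Function.update (fun _ => -(L+1)) i0 ((k:ℝ)*δ - w)) (-(M+1))
def slabBoxB (d : ℕ) (L M w δ : ℝ) (i0 : Fin d) (k : ℤ) : Fin (d+1) → ℝ :=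
  Fin.snoc (Function.update (fun _ => (L+1)) i0 ((k:ℝ)*δ)) (M+1)

lemma vol_plateauBox (L κ v : ℝ) (hL : 0 ≤ L) (hκ : 0 ≤ κ) :
    volume (boxOf (plateauBoxA d L κ v) (plateauBoxB d L κ v))
      = ENNReal.ofReal ((2*(L+1))^d * (2*κ)) := by
  rw [volBox, Fin.prod_univ_castSucc]
  simp only [plateauBoxA, plateauBoxB, Fin.snoc_castSucc, Fin.snoc_last]
  have h1 : (L+1) - -(L+1) = 2*(L+1) := by ring
  have h2 : (v + κ) - (v - κ) = 2*κ := by ring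
  rw [h1, h2, Finset.prod_const, Finset.card_univ, Fintype.card_fin,
    ← ENNReal.ofReal_pow (by linarith), ← ENNReal.ofReal_mul (by positivity)]

lemma vol_slabBox (L M w δ : ℝ) (i0 : Fin d) (k : ℤ)
    (hL : 0 ≤ L) (hM : 0 ≤ M) (hw : 0 ≤ w) :
    volume (boxOf (slabBoxA d L M w δ i0 k) (slabBoxB d L M w δ i0 k))
      ≤ ENNReal.ofReal ((2*(L+1))^d * w * (2*(M+1))) := by
  rw [volBox, Fin.prod_univ_castSucc]
  simp only [slabBoxA, slabBoxB, Fin.snoc_castSucc, Fin.snoc_last]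
  have h2 : (M+1) - -(M+1) = 2*(M+1) := by ring
  rw [h2]
  set fj : Fin d → ℝ≥0∞ := fun j => ENNReal.ofReal
    (Function.update (fun _ => (L+1)) i0 ((k:ℝ)*δ) j -
     Function.update (fun _ => -(L+1)) i0 ((k:ℝ)*δ - w) j) with hfj
  have hsplit : ∏ j, fj j = fj i0 * ∏ j ∈ Finset.univ.erase i0, fj j :=
    (Finset.mul_prod_erase Finset.univ fj (Finset.mem_univ i0)).symm
  have hfi0 : fj i0 = ENNReal.ofReal w := by
    rw [hfj]; simp only [Function.update_self]; congr 1; ring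
  have herase : ∏ j ∈ Finset.univ.erase i0, fj j = ENNReal.ofReal (2*(L+1)) ^ (d-1) := by
    rw [Finset.prod_congr rfl (fun j hj => ?_)]
    · rw [Finset.prod_const, Finset.card_erase_of_mem (Finset.mem_univ i0),
        Finset.card_univ, Fintype.card_fin]
    · rw [hfj]
      simp only
      rw [Function.update_of_ne (Finset.ne_of_mem_erase hj),
        Function.update_of_ne (Finset.ne_of_mem_erase hj)]
      congr 1; ring
  rw [hsplit, hfi0, herase,
    ← ENNReal.ofReal_pow (by linarith), ← ENNReal.ofReal_mul hw, ← ENNReal.ofReal_mul (by positivity)]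
  apply ENNReal.ofReal_le_ofReal
  have hpow : (2*(L+1))^(d-1) ≤ (2*(L+1))^d :=
    pow_le_pow_right₀ (by linarith) (Nat.sub_le d 1)
  have h3 : 0 ≤ 2*(M+1) := by linarith
  calc w * (2*(L+1))^(d-1) * (2*(M+1)) ≤ w * (2*(L+1))^d * (2*(M+1)) := by
        apply mul_le_mul_of_nonneg_right (mul_le_mul_of_nonneg_left hpow hw) h3
    _ = (2*(L+1))^d * w * (2*(M+1)) := by ring

lemma mem_plateauBox (L κ v y : ℝ) (x : Fin d → ℝ) (hx : ∀ j, |x j| ≤ L)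
    (hy : |y - v| ≤ κ) :
    ∀ i, (Fin.snoc x y : Fin (d+1) → ℝ) i ∈
      Set.Icc (plateauBoxA d L κ v i) (plateauBoxB d L κ v i) := by
  intro i
  refine Fin.lastCases ?_ (fun j => ?_) i
  · simp only [plateauBoxA, plateauBoxB, Fin.snoc_last]
    rw [abs_le] at hy
    exact ⟨by linarith [hy.1], by linarith [hy.2]⟩
  · simp only [plateauBoxA, plateauBoxB, Fin.snoc_castSucc]
    have := abs_le.1 (hx j)
    exact ⟨by linarith [this.1], by linarith [this.2]⟩

lemma mem_slabBox (L M w δ y : ℝ) (x : Fin d → ℝ) (i0 : Fin d) (k : ℤ)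
    (hx : ∀ j, |x j| ≤ L) (hk1 : (k:ℝ)*δ - w ≤ x i0) (hk2 : x i0 ≤ (k:ℝ)*δ)
    (hy : |y| ≤ M + 1) :
    ∀ i, (Fin.snoc x y : Fin (d+1) → ℝ) i ∈
      Set.Icc (slabBoxA d L M w δ i0 k i) (slabBoxB d L M w δ i0 k i) := by
  intro i
  refine Fin.lastCases ?_ (fun j => ?_) i
  · simp only [slabBoxA, slabBoxB, Fin.snoc_last]
    have := abs_le.1 hy
    exact ⟨by linarith [this.1], by linarith [this.2]⟩
  · simp only [slabBoxA, slabBoxB, Fin.snoc_castSucc]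
    by_cases hji : j = i0
    · subst hji
      rw [Function.update_self, Function.update_self]
      exact ⟨hk1, hk2⟩
    · rw [Function.update_of_ne hji, Function.update_of_ne hji]
      have := abs_le.1 (hx j)
      exact ⟨by linarith [this.1], by linarith [this.2]⟩

lemma vol_dfltBox : volume (boxOf (fun _ : Fin (d+1) => (0:ℝ)) (fun _ => 0)) = 0 := by
  rw [volBox, Finset.prod_eq_zero (Finset.mem_univ (0 : Fin (d+1)))]
  simp

lemma floor_grid_mem {L δ t : ℝ} (hδ : 0 < δ) (hδ2 : δ ≤ 2) (ht : |t| ≤ L) :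
    ⌊t/δ⌋ ∈ Finset.Icc (⌈(-(L+2))/δ⌉) (⌊(L+2)/δ⌋) := by
  rw [Finset.mem_Icc]
  have h3 := abs_le.1 ht
  constructor
  · apply Int.ceil_le.2
    rw [div_le_iff₀ hδ]
    have h1 : (t / δ) - 1 < (⌊t / δ⌋ : ℝ) := Int.sub_one_lt_floor _
    have h2 : δ * (t / δ) = t := by field_simp
    nlinarith
  · apply Int.floor_le_floor
    have h4 : t ≤ L + 2 := by linarith [h3.2]
    gcongr

lemma succ_floor_grid_mem {L δ t : ℝ} (hδ : 0 < δ) (hδ2 : δ ≤ 2) (ht : |t| ≤ L) :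
    ⌊t/δ⌋ + 1 ∈ Finset.Icc (⌈(-(L+2))/δ⌉) (⌊(L+2)/δ⌋) := by
  rw [Finset.mem_Icc]
  have h3 := abs_le.1 ht
  have h2 : δ * (t / δ) = t := by field_simp
  constructor
  · apply Int.ceil_le.2
    rw [div_le_iff₀ hδ]
    have h1 : (t/δ) < ((⌊t/δ⌋ + 1 : ℤ) : ℝ) := by push_cast; exact Int.lt_floor_add_one _
    nlinarith
  · apply Int.le_floor.2
    rw [le_div_iff₀ hδ]
    have h1 : (⌊t/δ⌋ : ℝ) ≤ t/δ := Int.floor_le _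
    push_cast
    nlinarith


variable {d : ℕ}

set_option maxHeartbeats 1000000 in
lemma dense_USet (hd : 0 < d) (Ω : Set (Euc d)) (K : Set ↥Ω)
    (hK : IsCompact K) (c : ℕ → ℕ) {θ : ℝ} (hθ : 0 < θ) (hθ1 : θ ≤ 1) :
    Dense (USet Ω K c θ) := by
  intro f
  apply mem_closure_char
  intro K' hK' η hη
  -- the compact core and Tietze extension
  have hK0 : IsCompact (K ∪ K') := hK.union hK'
  have hCcomp : IsCompact (Subtype.val '' (K ∪ K') : Set (Euc d)) :=
    hK0.image continuous_subtype_val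
  set CC : Set (Euc d) := Subtype.val '' (K ∪ K') with hCdef
  have hCsub : ∀ v : Euc d, v ∈ CC → v ∈ Ω := by
    rintro v ⟨x, _, rfl⟩; exact x.2
  obtain ⟨F, hF⟩ := (f.comp (⟨fun v => ⟨v.1, hCsub v.1 v.2⟩,
    (continuous_subtype_val).subtype_mk _⟩ : C(↥CC, ↥Ω))).exists_restrict_eq hCcomp.isClosed
  have hFv : ∀ x : ↥Ω, x ∈ K ∪ K' → F x.1 = f x := by
    intro x hx
    have h1 := DFunLike.congr_fun hF (⟨x.1, ⟨x, hx, rfl⟩⟩ : ↥CC)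
    simpa using h1
  -- bounds
  obtain ⟨L0, hL0⟩ := (Metric.isBounded_iff_subset_closedBall 0).1 hCcomp.isBounded
  set L : ℝ := max L0 0 with hLdef
  have hL : 0 ≤ L := le_max_right _ _
  have hCL : ∀ v ∈ CC, ‖v‖ ≤ L := by
    intro v hv
    have h2 := hL0 hv
    rw [Metric.mem_closedBall, dist_zero_right] at h2
    exact h2.trans (le_max_left _ _)
  have hDcomp : IsCompact (Metric.closedBall (0 : Euc d) (L+2)) := isCompact_closedBall _ _
  set D : Set (Euc d) := Metric.closedBall 0 (L+2) with hDdef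
  have hmemD : ∀ v : Euc d, ‖v‖ ≤ L + 2 → v ∈ D := by
    intro v hv; rw [hDdef, Metric.mem_closedBall, dist_zero_right]; exact hv
  obtain ⟨δ0, hδ0, hδ0'⟩ := Metric.uniformContinuousOn_iff.1
    (hDcomp.uniformContinuousOn_of_continuous F.continuous.continuousOn) (η/2) (half_pos hη)
  set δ : ℝ := min δ0 1 / (d+1) with hδdef
  have hδpos : 0 < δ := by
    apply div_pos (lt_min hδ0 one_pos); positivity
  have hδd1 : δ * (d+1) ≤ min δ0 1 := by
    rw [hδdef, div_mul_cancel₀]; positivity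
  have hδdlt : δ * d < δ0 := by
    have h1 : δ * (d+1) ≤ δ0 := hδd1.trans (min_le_left _ _)
    nlinarith
  have hδd2 : δ * d ≤ 1 := by
    have h1 : δ * (d+1) ≤ 1 := hδd1.trans (min_le_right _ _)
    nlinarith
  have hδ1 : δ ≤ 1 := by
    have h1 : δ * (d+1) ≤ 1 := hδd1.trans (min_le_right _ _)
    nlinarith [hδpos, Nat.cast_nonneg (α := ℝ) d]
  have hδ2 : δ ≤ 2 := hδ1.trans one_le_two
  obtain ⟨M0, hM0⟩ := hDcomp.exists_bound_of_continuousOn F.continuous.continuousOn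
  set M : ℝ := max M0 0 with hMdef
  have hM : ∀ v ∈ D, |F v| ≤ M := fun v hv => (hM0 v hv).trans (le_max_left _ _)
  have hMpos : 0 ≤ M := le_max_right _ _
  -- the grid
  set lo : ℤ := ⌈(-(L+2))/δ⌉ with hlodef
  set hi : ℤ := ⌊(L+2)/δ⌋ with hhidef
  set toE : (Fin d → ℝ) → Euc d := fun v => (EuclideanSpace.equiv (Fin d) ℝ).symm v with htoEdef
  have htoE : ∀ (v : Fin d → ℝ) (i : Fin d), toE v i = v i := fun _ _ => rfl
  set V : Finset ℝ := (Fintype.piFinset fun _ : Fin d => Finset.Icc lo hi).image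
    (fun p => F (toE (fun i => δ * ((p i : ℤ) : ℝ)))) with hVdef
  set len : ℕ := V.card + d * (Finset.Icc lo hi).card with hlendef
  set Emax : ℕ := (Finset.range len).sup c with hEmaxdef
  have hT : (0:ℝ) < θ^Emax := by positivity
  have hP : (0:ℝ) < (2*(L+1))^d := by positivity
  have hG1 : (1:ℝ) ≤ 2*(L+1) := by linarith
  set κ : ℝ := θ^Emax / (2*(2*(L+1))^d) with hκdef
  have hκpos : 0 < κ := by rw [hκdef]; positivity
  set w : ℝ := min (δ/2) (θ^Emax / (2*(2*(L+1))^d*(M+1))) with hwdef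
  have hwpos : 0 < w := lt_min (by positivity) (by positivity)
  have hwδ : w ≤ δ := (min_le_left _ _).trans (by linarith)
  have hw2 : w ≤ θ^Emax / (2*(2*(L+1))^d*(M+1)) := min_le_right _ _
  set ρ : ℝ := min κ 1 with hρdef
  have hρpos : 0 < ρ := lt_min hκpos one_pos
  have hρκ : ρ ≤ κ := min_le_left _ _
  have hρ1 : ρ ≤ 1 := min_le_right _ _
  -- the boxes
  set boxesP : List ((Fin (d+1) → ℝ) × (Fin (d+1) → ℝ)) := V.toList.map (fun v =>
    (plateauBoxA d L κ v, plateauBoxB d L κ v)) with hboxesP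
  set boxesS : List ((Fin (d+1) → ℝ) × (Fin (d+1) → ℝ)) :=
    ((List.finRange d) ×ˢ (Finset.Icc lo hi).toList).map (fun ik =>
      (slabBoxA d L M w δ ik.1 ik.2, slabBoxB d L M w δ ik.1 ik.2)) with hboxesS
  set boxes := boxesP ++ boxesS with hboxes
  have hlen : boxes.length = len := by
    rw [hboxes, List.length_append, hboxesP, hboxesS, List.length_map, List.length_map,
      List.length_product, List.length_finRange, Finset.length_toList, Finset.length_toList,
      hlendef]
  set dflt : (Fin (d+1) → ℝ) × (Fin (d+1) → ℝ) := (fun _ => 0, fun _ => 0) with hdflt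
  -- the staircase and the approximating function
  have hrcont : Continuous (stair δ w) := stair_continuous hδpos hwpos hwδ
  have hRcont : Continuous (fun v : Euc d => toE (fun i => stair δ w (v i))) := by
    apply (EuclideanSpace.equiv (Fin d) ℝ).symm.continuous.comp
    exact continuous_pi fun i => hrcont.comp (EuclideanSpace.proj (𝕜 := ℝ) i).continuous
  set R : Euc d → Euc d := fun v => toE (fun i => stair δ w (v i)) with hRdef
  set g : C(↥Ω, ℝ) := ⟨fun x => F (R x.1), F.continuous.comp (hRcont.comp continuous_subtype_val)⟩
    with hgdef
  have hgx : ∀ x : ↥Ω, g x = F (R x.1) := fun _ => rfl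
  have hRdist : ∀ v : Euc d, dist (R v) v ≤ δ * d := by
    intro v
    have h5 := euc_dist_le (R v) v hδpos.le (fun i => by
      have h0 : R v i = stair δ w (v i) := rfl
      rw [h0]; exact stair_dist hδpos (v i))
    calc dist (R v) v ≤ (d : ℝ) * δ := h5
      _ = δ * d := mul_comm _ _
  have hRD : ∀ v : Euc d, ‖v‖ ≤ L → R v ∈ D := by
    intro v hv
    apply hmemD
    have hns := norm_sub_norm_le (R v) v
    have hdd : dist (R v) v = ‖R v - v‖ := dist_eq_norm _ _
    have := hRdist v
    linarith [hδd2]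
  refine ⟨g, ?_, ?_⟩
  · -- g ∈ USet
    refine ⟨fun n => (boxes.getD n dflt).1, fun n => (boxes.getD n dflt).2, ρ, hρpos, ?_, ?_⟩
    · -- volume bounds
      intro n
      show volume (boxOf (boxes.getD n dflt).1 (boxes.getD n dflt).2)
        ≤ ENNReal.ofReal (θ ^ c n)
      by_cases hn : n < boxes.length
      · have hmem : boxes.getD n dflt ∈ boxes := by
          rw [List.getD_eq_getElem boxes dflt hn]
          exact List.getElem_mem hn
        have hkey : volume (boxOf (boxes.getD n dflt).1 (boxes.getD n dflt).2)
            ≤ ENNReal.ofReal (θ^Emax) := by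
          rcases List.mem_append.1 hmem with hPm | hSm
          · obtain ⟨v0, _, heq⟩ := List.mem_map.1 hPm
            rw [← heq]
            rw [vol_plateauBox L κ v0 hL hκpos.le]
            apply ENNReal.ofReal_le_ofReal
            have hκval : (2*(L+1))^d * (2*κ) = θ^Emax := by
              rw [hκdef]
              field_simp
            linarith [hκval]
          · obtain ⟨⟨i0, k⟩, _, heq⟩ := List.mem_map.1 hSm
            rw [← heq]
            refine le_trans (vol_slabBox L M w δ i0 k hL hMpos hwpos.le) ?_
            apply ENNReal.ofReal_le_ofReal
            calc (2*(L+1))^d * w * (2*(M+1))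
                = ((2*(L+1))^d * (2*(M+1))) * w := by ring
              _ ≤ ((2*(L+1))^d * (2*(M+1))) * (θ^Emax / (2*(2*(L+1))^d*(M+1))) :=
                  mul_le_mul_of_nonneg_left hw2 (by positivity)
              _ = θ^Emax := by field_simp
        refine hkey.trans (ENNReal.ofReal_le_ofReal ?_)
        apply pow_le_pow_of_le_one hθ.le hθ1
        apply Finset.le_sup (f := c)
        rw [Finset.mem_range]
        rw [hlen] at hn
        exact hn
      · push_neg at hn
        rw [List.getD_eq_default boxes dflt hn, hdflt]
        rw [vol_dfltBox]
        exact zero_le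
    · -- covering with margin
      intro x hx y hy
      have hvC : (x : Euc d) ∈ CC := ⟨x, Or.inl hx, rfl⟩
      have hvL : ‖(x : Euc d)‖ ≤ L := hCL _ hvC
      have hvi : ∀ i, |(x : Euc d) i| ≤ L := fun i => (abs_coord_le_norm_s19 _ i).trans hvL
      by_cases hgood : ∀ i, Int.fract ((x : Euc d) i / δ) ≤ 1 - w/δ
      · -- plateau case
        have hRV : R (x : Euc d) = toE (fun i => δ * ((⌊(x : Euc d) i / δ⌋ : ℤ) : ℝ)) := by
          rw [hRdef]
          beta_reduce
          congr 1
          funext i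
          exact stair_eq_grid hδpos hwpos (hgood i)
        have hmemV : F (R (x : Euc d)) ∈ V := by
          rw [hRV, hVdef]
          exact Finset.mem_image_of_mem _
            (Fintype.mem_piFinset.2 fun i => floor_grid_mem hδpos hδ2 (hvi i))
        have hmemBox : (plateauBoxA d L κ (F (R (x : Euc d))),
            plateauBoxB d L κ (F (R (x : Euc d)))) ∈ boxes :=
          List.mem_append_left _ (List.mem_map_of_mem (Finset.mem_toList.2 hmemV))
        obtain ⟨n, hn⟩ := exists_getD boxes _ hmemBox dflt
        refine ⟨n, ?_⟩
        show ∀ i, (Fin.snoc (x : Euc d) y : Fin (d+1) → ℝ) i ∈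
          Set.Icc ((boxes.getD n dflt).1 i) ((boxes.getD n dflt).2 i)
        rw [hn]
        apply mem_plateauBox L κ (F (R (x : Euc d))) y _ hvi
        rw [← hgx x]
        exact hy.trans hρκ
      · -- slab case
        push_neg at hgood
        obtain ⟨i0, hi0⟩ := hgood
        have hkIcc : ⌊(x : Euc d) i0 / δ⌋ + 1 ∈ Finset.Icc lo hi :=
          succ_floor_grid_mem hδpos hδ2 (hvi i0)
        have hmemBox : (slabBoxA d L M w δ i0 (⌊(x : Euc d) i0 / δ⌋ + 1),
            slabBoxB d L M w δ i0 (⌊(x : Euc d) i0 / δ⌋ + 1)) ∈ boxes := by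
          apply List.mem_append_right
          apply List.mem_map_of_mem (f := fun ik : Fin d × ℤ =>
            (slabBoxA d L M w δ ik.1 ik.2, slabBoxB d L M w δ ik.1 ik.2))
            (a := (i0, ⌊(x : Euc d) i0 / δ⌋ + 1))
          exact List.mem_product.2 ⟨List.mem_finRange _, Finset.mem_toList.2 hkIcc⟩
        obtain ⟨n, hn⟩ := exists_getD boxes _ hmemBox dflt
        refine ⟨n, ?_⟩
        show ∀ i, (Fin.snoc (x : Euc d) y : Fin (d+1) → ℝ) i ∈
          Set.Icc ((boxes.getD n dflt).1 i) ((boxes.getD n dflt).2 i)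
        rw [hn]
        have hu1 : δ * ((x : Euc d) i0 / δ) = (x : Euc d) i0 := by field_simp
        have hfr : Int.fract ((x : Euc d) i0 / δ)
            = (x : Euc d) i0 / δ - ⌊(x : Euc d) i0 / δ⌋ := (Int.self_sub_floor _).symm
        apply mem_slabBox L M w δ y _ i0 _ hvi
        · -- lower bound
          push_cast
          have h1 : 1 - w/δ < (x : Euc d) i0 / δ - (⌊(x : Euc d) i0 / δ⌋ : ℝ) := by
            rw [← hfr]; exact hi0
          have hw1 : δ * (w/δ) = w := by field_simp
          nlinarith [mul_lt_mul_of_pos_left h1 hδpos]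
        · -- upper bound
          push_cast
          have h1 : (x : Euc d) i0 / δ < (⌊(x : Euc d) i0 / δ⌋ : ℝ) + 1 :=
            Int.lt_floor_add_one _
          nlinarith [mul_lt_mul_of_pos_left h1 hδpos]
        · -- |y| ≤ M + 1
          have h2 : |g x| ≤ M := by
            rw [hgx x]
            exact hM _ (hRD _ hvL)
          have h1 := abs_le.1 hy
          have h3 := abs_le.1 h2
          rw [abs_le]
          exact ⟨by linarith [h1.1, h3.1], by linarith [h1.2, h3.2]⟩
  · -- closeness on K'
    intro x hx
    have hvC : (x : Euc d) ∈ CC := ⟨x, Or.inr hx, rfl⟩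
    have hvL : ‖(x : Euc d)‖ ≤ L := hCL _ hvC
    have h1 : f x = F (x : Euc d) := (hFv x (Or.inr hx)).symm
    have h2 : g x = F (R (x : Euc d)) := hgx x
    rw [h1, h2]
    have h3 : dist (F (x : Euc d)) (F (R (x : Euc d))) < η/2 := by
      apply hδ0' _ (hmemD _ (by linarith)) _ (hRD _ hvL)
      rw [dist_comm]
      exact lt_of_le_of_lt (hRdist _) hδdlt
    linarith [h3]


end StmtAux

theorem stmt19
    (d : ℕ) (hd : 0 < d) (Ω : Set (EuclideanSpace ℝ (Fin d)))
    (hΩ : LocallyCompactSpace Ω) :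
    ∀ᶠ f : C(↥Ω, ℝ) in residual C(↥Ω, ℝ),
      Microscopic {y : EuclideanSpace ℝ (Fin (d + 1)) |
        ∃ (x : EuclideanSpace ℝ (Fin d)) (hx : x ∈ Ω), y = WithLp.toLp 2 (Fin.snoc (WithLp.ofLp x) (f ⟨x, hx⟩))} := by
  haveI := hΩ
  haveI : SigmaCompactSpace ↥Ω := inferInstance
  set K : ℕ → Set ↥Ω := compactCovering ↥Ω with hKdef
  -- the residual set
  set T : Set C(↥Ω, ℝ) :=
    ⋂ (p : ℕ × ℕ), USet Ω (K p.1) (fun n => Nat.pair p.1 n + 2) ((1:ℝ)/(p.2+2)) with hT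
  have hTmem : T ∈ residual C(↥Ω, ℝ) := by
    rw [hT]
    apply countable_iInter_mem.2
    intro p
    have hθ : (0:ℝ) < 1/(p.2+2) := by positivity
    have hθ1 : (1:ℝ)/(p.2+2) ≤ 1 := by
      rw [div_le_one (by positivity)]
      have : (0:ℝ) ≤ (p.2:ℝ) := Nat.cast_nonneg _
      linarith
    have ho := isOpen_USet Ω (K p.1) (isCompact_compactCovering ↥Ω p.1) (fun n => Nat.pair p.1 n + 2) ((1:ℝ)/(p.2+2))
    have hde := dense_USet hd Ω (K p.1) (isCompact_compactCovering ↥Ω p.1)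
      (fun n => Nat.pair p.1 n + 2) hθ hθ1
    rw [mem_residual]
    exact ⟨_, subset_rfl, ho.isGδ, hde⟩
  rw [Filter.eventually_iff]
  apply Filter.mem_of_superset hTmem
  intro f hf
  simp only [Set.mem_setOf_eq]
  intro ε hε
  -- reduce to ε ≤ 1/2
  set ε' : ℝ := min ε (1/2) with hε'def
  have hε' : 0 < ε' := lt_min hε (by norm_num)
  have hε'le : ε' ≤ 1/2 := min_le_right _ _
  have hε'ε : ε' ≤ ε := min_le_left _ _
  -- choose j with 1/(j+2) ≤ ε'
  obtain ⟨j, hj⟩ := exists_nat_gt (1/ε')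
  have hθε : (1:ℝ)/(j+2) ≤ ε' := by
    rw [div_le_iff₀ (by positivity)]
    rw [div_lt_iff₀ hε'] at hj
    have : (0:ℝ) ≤ (j:ℝ) := Nat.cast_nonneg _
    nlinarith
  have hθ : (0:ℝ) < 1/(j+2) := by positivity
  -- extract covers
  have hcov : ∀ m : ℕ, ∃ (a b : ℕ → Fin (d+1) → ℝ),
      (∀ n, volume (boxOf (a n) (b n)) ≤ ENNReal.ofReal (((1:ℝ)/(j+2)) ^ (Nat.pair m n + 2))) ∧
      (∀ x ∈ K m, ∃ n, ∀ i,
        (Fin.snoc (x : Euc d) (f x) : Fin (d+1) → ℝ) i ∈ Set.Icc (a n i) (b n i)) := by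
    intro m
    have := Set.mem_iInter.1 hf (m, j)
    obtain ⟨a, b, ρ, hρ, hvol, hc⟩ := this
    exact ⟨a, b, hvol, fun x hx => hc x hx (f x) (by simp [hρ.le])⟩
  choose A B hvol hc using hcov
  refine ⟨fun k => boxOf (A (Nat.unpair k).1 (Nat.unpair k).2) (B (Nat.unpair k).1 (Nat.unpair k).2),
    fun k => ⟨_, _, rfl⟩, ?_, ?_⟩
  · -- coverage
    rintro y ⟨x, hx, rfl⟩
    have hxU : (⟨x, hx⟩ : ↥Ω) ∈ ⋃ m, K m := by
      rw [hKdef, iUnion_compactCovering]; trivial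
    obtain ⟨m, hm⟩ := Set.mem_iUnion.1 hxU
    obtain ⟨n, hn⟩ := hc m ⟨x, hx⟩ hm
    apply Set.mem_iUnion.2 ⟨Nat.pair m n, ?_⟩
    rw [Nat.unpair_pair]
    exact hn
  · -- volume bound
    intro k
    calc volume (boxOf (A (Nat.unpair k).1 (Nat.unpair k).2) (B (Nat.unpair k).1 (Nat.unpair k).2))
        ≤ ENNReal.ofReal (((1:ℝ)/(j+2)) ^ (Nat.pair (Nat.unpair k).1 (Nat.unpair k).2 + 2)) :=
          hvol _ _
      _ ≤ ENNReal.ofReal (ε ^ (k + 1)) := by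
          rw [Nat.pair_unpair]
          apply ENNReal.ofReal_le_ofReal
          calc ((1:ℝ)/(j+2)) ^ (k + 2) ≤ ε' ^ (k+2) := by
                apply pow_le_pow_left₀ hθ.le hθε
            _ ≤ ε' ^ (k+1) := by
                apply pow_le_pow_of_le_one hε'.le (by linarith) (by omega)
            _ ≤ ε ^ (k+1) := pow_le_pow_left₀ hε'.le hε'ε _
end
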